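/- The pair (total canonical term graphs over Σ, d†) is an ultrametric space: d†(g,h) = 0 iff g = h, d†(g,h) = d†(h,g), and d†(g₁,g₃) ≤ max{d†(g₁,g₂), d†(g₂,g₃)} for all total canonical term graphs g, h, g₁, g₂, g₃. -/

import Mathlib

set_option autoImplicit false

namespace TGR

/-- A signature: a type of symbols, each with a finite arity. -/
structure Signature where
  Sym : Type
  ar : Sym → ℕ

/-- The signature `Σ_⊥`: `Σ` extended by a fresh nullary symbol `⊥` (here `none`). -/
def Signature.bot (S : Signature) : Signature where
  Sym := Option S.Sym
  ar := fun o => match o with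
    | none => 0
    | some f => S.ar f

/-- A rooted graph over a signature `S` with nodes `N`: a labelling, a successor
function respecting arities, and a root node. -/
structure TermGraph (S : Signature) (N : Type) where
  lab : N → S.Sym
  suc : (n : N) → Fin (S.ar (lab n)) → N
  root : N

namespace TermGraph

variable {S : Signature} {N M K : Type}

/-- `g.IsPos π n`: `π` is a position (path of successor indices from the root) of node `n`. -/
inductive IsPos (g : TermGraph S N) : List ℕ → N → Prop
  | root : IsPos g [] g.root
  | step {π : List ℕ} {n : N} (h : IsPos g π n) (i : Fin (S.ar (g.lab n))) :
      IsPos g (π ++ [(i : ℕ)]) (g.suc n i)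

/-- All nodes are reachable from the root. -/
def Reachable (g : TermGraph S N) : Prop :=
  ∀ n : N, ∃ π : List ℕ, g.IsPos π n

/-- The set of positions of `g`. -/
def pos (g : TermGraph S N) : Set (List ℕ) :=
  {π | ∃ n : N, g.IsPos π n}

/-- The set of positions of node `n` in `g`. -/
def nodePos (g : TermGraph S N) (n : N) : Set (List ℕ) :=
  {π | g.IsPos π n}

/-- `π ∼_g π'`: `π` and `π'` are positions of the same node. -/
def Aliases (g : TermGraph S N) (π π' : List ℕ) : Prop :=
  ∃ n : N, g.IsPos π n ∧ g.IsPos π' n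

/-- A position is acyclic if it passes no node twice. -/
def IsAcyclicPos (g : TermGraph S N) (π : List ℕ) : Prop :=
  ∀ (π₁ π₂ : List ℕ) (n : N), π₁ <+: π₂ → π₂ <+: π →
    g.IsPos π₁ n → g.IsPos π₂ n → π₁ = π₂

/-- The set of acyclic positions of node `n` in `g`. -/
def nodePosAcy (g : TermGraph S N) (n : N) : Set (List ℕ) :=
  {π | g.IsPos π n ∧ g.IsAcyclicPos π}

/-- The set of acyclic positions of `g`. -/
def posAcy (g : TermGraph S N) : Set (List ℕ) :=
  {π | (∃ n : N, g.IsPos π n) ∧ g.IsAcyclicPos π}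

/-- The depth of a node: the minimal length of its positions. -/
noncomputable def depth (g : TermGraph S N) (n : N) : ℕ :=
  sInf {k : ℕ | ∃ π : List ℕ, g.IsPos π n ∧ π.length = k}

open Classical in
/-- The (unique) node at a position. -/
noncomputable def nodeAt (g : TermGraph S N) (π : List ℕ) : N :=
  if h : ∃ n : N, g.IsPos π n then h.choose else g.root

/-- The label `g(π)` at a position. -/
noncomputable def labAt (g : TermGraph S N) (π : List ℕ) : S.Sym :=
  g.lab (g.nodeAt π)

/-- `Δ`-homomorphism: root, labelling and successor conditions, the latter two
suspended on `Δ`-labelled nodes. -/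
structure IsDHom (Δ : Set S.Sym) (g : TermGraph S N) (h : TermGraph S M)
    (φ : N → M) : Prop where
  root_eq : φ g.root = h.root
  lab_eq : ∀ n : N, g.lab n ∉ Δ → h.lab (φ n) = g.lab n
  suc_eq : ∀ n : N, g.lab n ∉ Δ → ∀ (i : ℕ) (hi : i < S.ar (g.lab n))
      (hi' : i < S.ar (h.lab (φ n))),
      φ (g.suc n ⟨i, hi⟩) = h.suc (φ n) ⟨i, hi'⟩

/-- Rigidity: `Pa_g(n) = Pa_h(φ n)` for all non-`Δ`-labelled nodes `n`. -/
def IsRigid (Δ : Set S.Sym) (g : TermGraph S N) (h : TermGraph S M)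
    (φ : N → M) : Prop :=
  ∀ n : N, g.lab n ∉ Δ → g.nodePosAcy n = h.nodePosAcy (φ n)

/-- Rigid `Δ`-homomorphism. -/
def IsRigidDHom (Δ : Set S.Sym) (g : TermGraph S N) (h : TermGraph S M)
    (φ : N → M) : Prop :=
  IsDHom Δ g h φ ∧ IsRigid Δ g h φ

/-- Isomorphism of term graphs: a homomorphism with an inverse homomorphism. -/
def Iso (g : TermGraph S N) (h : TermGraph S M) : Prop :=
  ∃ (φ : N → M) (ψ : M → N), IsDHom ∅ g h φ ∧ IsDHom ∅ h g ψ ∧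
    (∀ n : N, ψ (φ n) = n) ∧ (∀ m : M, φ (ψ m) = m)

/-- A partial term graph (over `Σ_⊥`) is total if no node is labelled `⊥`. -/
def Total (g : TermGraph S.bot N) : Prop := ∀ n : N, g.lab n ≠ none

/-- Rigid `⊥`-homomorphism between partial term graphs. -/
def IsRigidBotHom (g : TermGraph S.bot N) (h : TermGraph S.bot M)
    (φ : N → M) : Prop :=
  IsRigidDHom ({none} : Set (Option S.Sym)) g h φ

/-- The `⊥`-depth of a partial term graph: the minimal depth of a `⊥`-labelled
node, `ω` (`⊤`) if there is none. -/
noncomputable def botDepth (g : TermGraph S.bot N) : ℕ∞ :=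
  sInf {d : ℕ∞ | ∃ n : N, g.lab n = none ∧ (g.depth n : ℕ∞) = d}

/-- `m` is an acyclic predecessor of `n`: some acyclic position `π ++ [i]` of `n`
has `π` a position of `m`. -/
def acyPred (g : TermGraph S N) (n : N) : Set N :=
  {m | ∃ (π : List ℕ) (i : ℕ), (π ++ [i]) ∈ g.nodePosAcy n ∧ g.IsPos π m}

/-- Retained nodes of the truncation at depth `d`: the least set of nodes
containing all nodes of depth `< d` and closed under acyclic predecessors. -/
inductive Retained (g : TermGraph S N) (d : ℕ) : N → Prop
  | shallow {n : N} : g.depth n < d → Retained g d n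
  | pred {n m : N} : Retained g d n → m ∈ g.acyPred n → Retained g d m

theorem not_retained_zero {g : TermGraph S N} (n : N) : ¬ g.Retained 0 n := by
  intro h
  induction h with
  | shallow hd => exact Nat.not_lt_zero _ hd
  | pred _ _ ih => exact ih

/-- Fringe nodes of the truncation at depth `d` (a pair `(n, i)` stands for the
fresh node `n^i`); at depth `0` the fringe is just (a copy of) the root. -/
def IsFringe (g : TermGraph S.bot N) (d : ℕ) (p : N × ℕ) : Prop :=
  if d = 0 then p = (g.root, 0)
  else g.Retained d p.1 ∧ ∃ h : p.2 < S.bot.ar (g.lab p.1),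
    (¬ g.Retained d (g.suc p.1 ⟨p.2, h⟩) ∨
      (d - 1 ≤ g.depth p.1 ∧ p.1 ∉ g.acyPred (g.suc p.1 ⟨p.2, h⟩)))

/-- The node set of the rigid truncation: retained nodes plus fringe nodes. -/
def TNode (g : TermGraph S.bot N) (d : ℕ) : Type :=
  {x : N ⊕ (N × ℕ) // Sum.elim (g.Retained d) (g.IsFringe d) x}

def truncLab (g : TermGraph S.bot N) (d : ℕ) (x : TNode g d) : S.bot.Sym :=
  Sum.elim (fun n => g.lab n) (fun _ => none) x.1

open Classical in
noncomputable def truncSuc (g : TermGraph S.bot N) (d : ℕ) :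
    (x : TNode g d) → Fin (S.bot.ar (truncLab g d x)) → TNode g d
  | ⟨Sum.inl n, hn⟩ => fun i =>
      if hf : g.IsFringe d (n, (i : ℕ)) then ⟨Sum.inr (n, (i : ℕ)), hf⟩
      else
        ⟨Sum.inl (g.suc n ⟨(i : ℕ), i.isLt⟩), by
          show g.Retained d (g.suc n ⟨(i : ℕ), i.isLt⟩)
          rcases Nat.eq_zero_or_pos d with hd | hd
          · subst hd
            exact ((not_retained_zero n) hn).elim
          · by_contra hc
            apply hf
            show g.IsFringe d (n, (i : ℕ))
            unfold IsFringe
            rw [if_neg (Nat.pos_iff_ne_zero.mp hd)]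
            exact ⟨hn, i.isLt, Or.inl hc⟩⟩
  | ⟨Sum.inr p, hp⟩ => fun i => absurd i.isLt (Nat.not_lt_zero _)

noncomputable def truncRoot (g : TermGraph S.bot N) (d : ℕ) : TNode g d :=
  if hd : d = 0 then
    ⟨Sum.inr (g.root, 0), by
      subst hd
      show g.IsFringe 0 (g.root, 0)
      simp [IsFringe]⟩
  else
    ⟨Sum.inl g.root, by
      show g.Retained d g.root
      exact Retained.shallow (lt_of_le_of_lt
        (Nat.sInf_le ⟨[], IsPos.root, rfl⟩) (Nat.pos_of_ne_zero hd))⟩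

/-- The rigid truncation `g†d` of a partial term graph at finite depth `d`. -/
noncomputable def trunc (g : TermGraph S.bot N) (d : ℕ) :
    TermGraph S.bot (TNode g d) where
  lab := truncLab g d
  suc := truncSuc g d
  root := truncRoot g d

end TermGraph

/-- A canonical term graph: a term graph whose nodes are sets of positions,
each node being exactly its set of positions, with all nodes reachable. -/
structure CTG (S : Signature) where
  nodes : Set (Set (List ℕ))
  tg : TermGraph S ↥nodes
  reach : tg.Reachable
  canon : ∀ n : ↥nodes, (n : Set (List ℕ)) = tg.nodePos n

namespace CTG

variable {S : Signature}

def pos (g : CTG S) : Set (List ℕ) := g.tg.pos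
def Aliases (g : CTG S) : List ℕ → List ℕ → Prop := g.tg.Aliases
def posAcy (g : CTG S) : Set (List ℕ) := g.tg.posAcy
noncomputable def labAt (g : CTG S) : List ℕ → S.Sym := g.tg.labAt

/-- A canonical partial term graph is total if it has no `⊥`-labelled node. -/
def Total (g : CTG S.bot) : Prop := g.tg.Total

/-- The rigid partial order `g ≤⊥r h`: there is a rigid `⊥`-homomorphism
from `g` to `h`. -/
def LeR (g h : CTG S.bot) : Prop :=
  ∃ φ, TermGraph.IsRigidBotHom g.tg h.tg φ

noncomputable def botDepth (g : CTG S.bot) : ℕ∞ := g.tg.botDepth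

/-- `TruncIso g h d`: the rigid truncations of `g` and `h` at depth `d ≤ ω`
are isomorphic (`g†ω = g`). -/
def TruncIso {N M : Type} (g : TermGraph S.bot N) (h : TermGraph S.bot M)
    (d : ℕ∞) : Prop :=
  (d = ⊤ → TermGraph.Iso g h) ∧
  ∀ k : ℕ, d = (k : ℕ∞) → TermGraph.Iso (g.trunc k) (h.trunc k)

/-- The rigid similarity `sim†(g,h)`: the maximal `d ≤ ω` such that
`g†d ≅ h†d`. -/
noncomputable def simr (g h : CTG S.bot) : ℕ∞ :=
  sSup {d : ℕ∞ | TruncIso g.tg h.tg d}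

open Classical in
/-- The rigid distance `d†(g,h) = 2^{-sim†(g,h)}` (with `2^{-ω} = 0`). -/
noncomputable def rdist (g h : CTG S.bot) : ℝ :=
  if simr g h = ⊤ then 0 else (1 / 2 : ℝ) ^ (simr g h).toNat

def IsUB (A : Set (CTG S.bot)) (u : CTG S.bot) : Prop := ∀ g ∈ A, LeR g u

def IsLubR (A : Set (CTG S.bot)) (u : CTG S.bot) : Prop :=
  IsUB A u ∧ ∀ v, IsUB A v → LeR u v

def IsLB (A : Set (CTG S.bot)) (l : CTG S.bot) : Prop := ∀ g ∈ A, LeR l g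

def IsGlbR (A : Set (CTG S.bot)) (l : CTG S.bot) : Prop :=
  IsLB A l ∧ ∀ m, IsLB A m → LeR m l

/-- A directed set: non-empty and every two elements have an upper bound inside. -/
def DirectedR (A : Set (CTG S.bot)) : Prop :=
  A.Nonempty ∧ ∀ g ∈ A, ∀ h ∈ A, ∃ u ∈ A, LeR g u ∧ LeR h u

/-- `L` is the limit inferior `⨆_{β<α} ⨅_{β≤ι<α} f ι` of the ordinal-indexed
sequence `(f ι)_{ι<α}` in the rigid partial order. -/
def IsLiminfR (α : Ordinal.{0}) (f : Ordinal.{0} → CTG S.bot) (L : CTG S.bot) : Prop :=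
  ∃ inf : Ordinal.{0} → CTG S.bot,
    (∀ β < α, IsGlbR {g | ∃ ι, β ≤ ι ∧ ι < α ∧ g = f ι} (inf β)) ∧
    IsLubR {g | ∃ β < α, g = inf β} L

/-- Cauchy condition for an ordinal-indexed sequence w.r.t. the rigid distance. -/
def OrdCauchy (α : Ordinal.{0}) (f : Ordinal.{0} → CTG S.bot) : Prop :=
  ∀ ε : ℝ, 0 < ε → ∃ β < α, ∀ ι ι' : Ordinal.{0},
    β < ι → ι < ι' → ι' < α → rdist (f ι) (f ι') < ε

/-- Convergence of an ordinal-indexed sequence to `g` w.r.t. the rigid distance. -/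
def OrdTendsto (α : Ordinal.{0}) (f : Ordinal.{0} → CTG S.bot) (g : CTG S.bot) : Prop :=
  ∀ ε : ℝ, 0 < ε → ∃ β < α, ∀ ι : Ordinal.{0}, β < ι → ι < α → rdist (f ι) g < ε

/-- `u` is the unravelling of `g`: the term tree with the same positions and
labels as `g` and trivial aliasing. -/
def IsUnravelling (g u : CTG S) : Prop :=
  u.pos = g.pos ∧ (∀ π ∈ g.pos, u.labAt π = g.labAt π) ∧
  (∀ π π' : List ℕ, u.Aliases π π' ↔ (π ∈ g.pos ∧ π = π'))

end CTG

/-- A labelled quotient tree over a signature `S`. -/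
structure LQT (S : Signature) where
  P : Set (List ℕ)
  nonempty : P.Nonempty
  l : List ℕ → S.Sym
  rel : List ℕ → List ℕ → Prop
  rel_refl : ∀ π ∈ P, rel π π
  rel_symm : ∀ π π' : List ℕ, rel π π' → rel π' π
  rel_trans : ∀ π π' π'' : List ℕ, rel π π' → rel π' π'' → rel π π''
  rel_mem : ∀ π π' : List ℕ, rel π π' → π ∈ P ∧ π' ∈ P
  reach_mem : ∀ (π : List ℕ) (i : ℕ), π ++ [i] ∈ P → π ∈ P
  reach_ar : ∀ (π : List ℕ) (i : ℕ), π ++ [i] ∈ P → i < S.ar (l π)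
  congr_lab : ∀ π π' : List ℕ, rel π π' → l π = l π'
  congr_suc : ∀ (π π' : List ℕ) (i : ℕ), rel π π' → i < S.ar (l π) →
    rel (π ++ [i]) (π' ++ [i])

end TGR

namespace TGR
namespace TermGraph

variable {S : Signature} {N M K : Type}

theorem isPos_cases {g : TermGraph S N} {π : List ℕ} {n : N} (h : g.IsPos π n) :
    (π = [] ∧ n = g.root) ∨
      ∃ (π' : List ℕ) (m : N) (i : Fin (S.ar (g.lab m))),
        g.IsPos π' m ∧ π = π' ++ [(i : ℕ)] ∧ n = g.suc m i := by
  cases h with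
  | root => exact Or.inl ⟨rfl, rfl⟩
  | step h i => exact Or.inr ⟨_, _, i, h, rfl, rfl⟩

/-- A position determines the node. -/
theorem isPos_unique {g : TermGraph S N} {π : List ℕ} {n n' : N}
    (h1 : g.IsPos π n) (h2 : g.IsPos π n') : n = n' := by
  induction h1 generalizing n' with
  | root =>
    rcases isPos_cases h2 with ⟨-, rfl⟩ | ⟨π', m, i, _, hπ, -⟩
    · rfl
    · exact absurd hπ.symm (List.append_ne_nil_of_right_ne_nil _ (by simp))
  | @step π n h i ih =>
    rcases isPos_cases h2 with ⟨hπ, -⟩ | ⟨π', m, i', h', hπ, rfl⟩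
    · exact absurd hπ (List.append_ne_nil_of_right_ne_nil _ (by simp))
    · obtain ⟨hπ, hi⟩ := List.append_inj' hπ rfl
      subst hπ
      obtain rfl := ih h'
      obtain rfl : i = i' := Fin.ext (by simpa using hi)
      rfl

/-- Snoc-positions decompose. -/
theorem isPos_snoc {g : TermGraph S N} {π : List ℕ} {i : ℕ} {n : N}
    (h : g.IsPos (π ++ [i]) n) :
    ∃ (m : N) (hi : i < S.ar (g.lab m)), g.IsPos π m ∧ n = g.suc m ⟨i, hi⟩ := by
  rcases isPos_cases h with ⟨hπ, -⟩ | ⟨π', m, i', h', hπ, rfl⟩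
  · exact absurd hπ (List.append_ne_nil_of_right_ne_nil _ (by simp))
  · obtain ⟨hπ, hi⟩ := List.append_inj' hπ rfl
    subst hπ
    obtain rfl : i = (i' : ℕ) := by simpa using hi
    exact ⟨m, i'.isLt, h', rfl⟩

/-- Prefixes of positions are positions. -/
theorem isPos_prefix {g : TermGraph S N} {π π' : List ℕ} {n : N}
    (h : g.IsPos π n) (hp : π' <+: π) : ∃ m : N, g.IsPos π' m := by
  induction h generalizing π' with
  | root => obtain rfl := List.prefix_nil.mp hp; exact ⟨g.root, IsPos.root⟩
  | @step π n h i ih =>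
    rcases List.prefix_concat_iff.mp hp with rfl | hp'
    · exact ⟨_, h.step i⟩
    · exact ih hp'

/-- Prefixes of acyclic positions are acyclic. -/
theorem IsAcyclicPos.prefix {g : TermGraph S N} {π π' : List ℕ}
    (h : g.IsAcyclicPos π) (hp : π' <+: π) : g.IsAcyclicPos π' :=
  fun π₁ π₂ n h1 h2 p1 p2 => h π₁ π₂ n h1 (h2.trans hp) p1 p2

/-- Path transplanting: a path suffix can be re-rooted at any other
position of the intermediate node. -/
theorem isPos_transplant {g : TermGraph S N} {σ τ σ' : List ℕ} {m n : N}
    (hσ : g.IsPos σ m) (h : g.IsPos (σ ++ τ) n) (hσ' : g.IsPos σ' m) :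
    g.IsPos (σ' ++ τ) n := by
  induction τ using List.reverseRecOn generalizing n with
  | nil =>
    rw [List.append_nil] at h ⊢
    obtain rfl := isPos_unique hσ h
    exact hσ'
  | append_singleton τ i ih =>
    rw [← List.append_assoc] at h
    obtain ⟨k, hi, hk, rfl⟩ := isPos_snoc h
    rw [← List.append_assoc]
    exact (ih hk).step ⟨i, hi⟩

theorem depth_le_length {g : TermGraph S N} {π : List ℕ} {n : N}
    (h : g.IsPos π n) : g.depth n ≤ π.length :=
  Nat.sInf_le ⟨π, h, rfl⟩

theorem exists_isPos_depth {g : TermGraph S N} {n : N} (hne : ∃ π, g.IsPos π n) :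
    ∃ π, g.IsPos π n ∧ π.length = g.depth n := by
  obtain ⟨π, hπ⟩ := hne
  have : g.depth n ∈ {k : ℕ | ∃ π : List ℕ, g.IsPos π n ∧ π.length = k} :=
    Nat.sInf_mem ⟨π.length, π, hπ, rfl⟩
  exact this

/-- A shortest position is acyclic. -/
theorem isAcyclicPos_of_min {g : TermGraph S N} {π : List ℕ} {n : N}
    (h : g.IsPos π n) (hmin : π.length = g.depth n) : g.IsAcyclicPos π := by
  intro π₁ π₂ m h1 h2 p1 p2
  obtain ⟨τ, rfl⟩ := h2
  have h3 : g.IsPos (π₁ ++ τ) n := isPos_transplant p2 h p1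
  have hle : g.depth n ≤ π₁.length + τ.length := by simpa using depth_le_length h3
  have h4 := h1.length_le
  have h5 : (π₂ ++ τ).length = π₂.length + τ.length := by simp
  exact List.IsPrefix.eq_of_length h1 (by omega)

end TermGraph
end TGR
namespace TGR
namespace TermGraph

variable {S : Signature} {N M K : Type}

attribute [reducible] TNode

theorem IsDHom.ar_eq {g : TermGraph S N} {h : TermGraph S M} {φ : N → M}
    (hφ : IsDHom ∅ g h φ) (n : N) : S.ar (h.lab (φ n)) = S.ar (g.lab n) := by
  rw [hφ.lab_eq n (Set.notMem_empty _)]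

theorem IsDHom.suc_eq' {g : TermGraph S N} {h : TermGraph S M} {φ : N → M}
    (hφ : IsDHom ∅ g h φ) (n : N) (i : Fin (S.ar (g.lab n))) :
    φ (g.suc n i) = h.suc (φ n) ⟨(i : ℕ), (hφ.ar_eq n).symm ▸ i.isLt⟩ := by
  exact hφ.suc_eq n (Set.notMem_empty _) i i.isLt _

theorem IsDHom.isPos {g : TermGraph S N} {h : TermGraph S M} {φ : N → M}
    (hφ : IsDHom ∅ g h φ) {π : List ℕ} {n : N} (hp : g.IsPos π n) :
    h.IsPos π (φ n) := by
  induction hp with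
  | root => rw [hφ.root_eq]; exact IsPos.root
  | @step π n hp i ih =>
    rw [hφ.suc_eq' n i]
    have h2 := ih.step (⟨(i : ℕ), (hφ.ar_eq n).symm ▸ i.isLt⟩ : Fin (S.ar (h.lab (φ n))))
    simpa using h2

/-- Extract the two homs of an isomorphism with their inverse properties. -/
theorem Iso.nodePos_eq {g : TermGraph S N} {h : TermGraph S M} {φ : N → M} {ψ : M → N}
    (hφ : IsDHom ∅ g h φ) (hψ : IsDHom ∅ h g ψ) (hψφ : ∀ n, ψ (φ n) = n) (n : N) :
    h.nodePos (φ n) = g.nodePos n := by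
  ext π
  constructor
  · intro hp
    have := hψ.isPos hp
    rwa [hψφ] at this
  · exact fun hp => hφ.isPos hp

theorem isAcyclic_of_hom {g : TermGraph S N} {h : TermGraph S M} {ψ : M → N}
    (hψ : IsDHom ∅ h g ψ) {π : List ℕ} (ha : g.IsAcyclicPos π) :
    h.IsAcyclicPos π := by
  intro π₁ π₂ n h1 h2 p1 p2
  exact ha π₁ π₂ (ψ n) h1 h2 (hψ.isPos p1) (hψ.isPos p2)

theorem Iso.nodePosAcy_eq {g : TermGraph S N} {h : TermGraph S M} {φ : N → M} {ψ : M → N}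
    (hφ : IsDHom ∅ g h φ) (hψ : IsDHom ∅ h g ψ) (hψφ : ∀ n, ψ (φ n) = n)
    (hφψ : ∀ m, φ (ψ m) = m) (n : N) :
    h.nodePosAcy (φ n) = g.nodePosAcy n := by
  ext π
  constructor
  · rintro ⟨hp, ha⟩
    have hp' := hψ.isPos hp
    rw [hψφ] at hp'
    exact ⟨hp', isAcyclic_of_hom hφ ha⟩
  · rintro ⟨hp, ha⟩
    exact ⟨hφ.isPos hp, isAcyclic_of_hom hψ ha⟩

theorem Iso.depth_eq {g : TermGraph S N} {h : TermGraph S M} {φ : N → M} {ψ : M → N}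
    (hφ : IsDHom ∅ g h φ) (hψ : IsDHom ∅ h g ψ) (hψφ : ∀ n, ψ (φ n) = n) (n : N) :
    h.depth (φ n) = g.depth n := by
  unfold depth
  congr 1
  ext k
  constructor
  · rintro ⟨π, hp, rfl⟩
    have := hψ.isPos hp
    rw [hψφ] at this
    exact ⟨π, this, rfl⟩
  · rintro ⟨π, hp, rfl⟩
    exact ⟨π, hφ.isPos hp, rfl⟩

theorem Iso.acyPred_mem {g : TermGraph S N} {h : TermGraph S M} {φ : N → M} {ψ : M → N}
    (hφ : IsDHom ∅ g h φ) (hψ : IsDHom ∅ h g ψ) (hψφ : ∀ n, ψ (φ n) = n)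
    (hφψ : ∀ m, φ (ψ m) = m) {m n : N} (hm : m ∈ g.acyPred n) :
    φ m ∈ h.acyPred (φ n) := by
  obtain ⟨π, i, hpa, hp⟩ := hm
  refine ⟨π, i, ?_, hφ.isPos hp⟩
  rw [Iso.nodePosAcy_eq hφ hψ hψφ hφψ]
  exact hpa

theorem Iso.acyPred_iff {g : TermGraph S N} {h : TermGraph S M} {φ : N → M} {ψ : M → N}
    (hφ : IsDHom ∅ g h φ) (hψ : IsDHom ∅ h g ψ) (hψφ : ∀ n, ψ (φ n) = n)
    (hφψ : ∀ m, φ (ψ m) = m) (m n : N) :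
    φ m ∈ h.acyPred (φ n) ↔ m ∈ g.acyPred n := by
  constructor
  · intro hmem
    have := Iso.acyPred_mem hψ hφ hφψ hψφ hmem
    rwa [hψφ, hψφ] at this
  · exact Iso.acyPred_mem hφ hψ hψφ hφψ

theorem Iso.retained {g : TermGraph S N} {h : TermGraph S M} {φ : N → M} {ψ : M → N}
    (hφ : IsDHom ∅ g h φ) (hψ : IsDHom ∅ h g ψ) (hψφ : ∀ n, ψ (φ n) = n)
    (hφψ : ∀ m, φ (ψ m) = m) {d : ℕ} {n : N} (hr : g.Retained d n) :
    h.Retained d (φ n) := by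
  induction hr with
  | @shallow n hd =>
    exact Retained.shallow (by rwa [Iso.depth_eq hφ hψ hψφ])
  | @pred n m _ hm ih =>
    exact ih.pred (Iso.acyPred_mem hφ hψ hψφ hφψ hm)

theorem Iso.retained_iff {g : TermGraph S N} {h : TermGraph S M} {φ : N → M} {ψ : M → N}
    (hφ : IsDHom ∅ g h φ) (hψ : IsDHom ∅ h g ψ) (hψφ : ∀ n, ψ (φ n) = n)
    (hφψ : ∀ m, φ (ψ m) = m) (d : ℕ) (n : N) :
    h.Retained d (φ n) ↔ g.Retained d n := by
  constructor
  · intro hr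
    have := Iso.retained hψ hφ hφψ hψφ hr
    rwa [hψφ] at this
  · exact Iso.retained hφ hψ hψφ hφψ

end TermGraph
end TGR
namespace TGR
namespace TermGraph

variable {S : Signature} {N M K : Type}

theorem iso_refl (g : TermGraph S N) : Iso g g :=
  ⟨id, id, ⟨rfl, fun _ _ => rfl, fun _ _ i hi hi' => rfl⟩,
    ⟨rfl, fun _ _ => rfl, fun _ _ i hi hi' => rfl⟩, fun _ => rfl, fun _ => rfl⟩

theorem iso_symm {g : TermGraph S N} {h : TermGraph S M} (hi : Iso g h) : Iso h g := by
  obtain ⟨φ, ψ, h1, h2, h3, h4⟩ := hi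
  exact ⟨ψ, φ, h2, h1, h4, h3⟩

theorem IsDHom.comp {g : TermGraph S N} {h : TermGraph S M} {k : TermGraph S K}
    {φ : N → M} {φ' : M → K} (h1 : IsDHom ∅ g h φ) (h2 : IsDHom ∅ h k φ') :
    IsDHom ∅ g k (φ' ∘ φ) := by
  refine ⟨?_, ?_, ?_⟩
  · show φ' (φ g.root) = k.root
    rw [h1.root_eq, h2.root_eq]
  · intro n _
    show k.lab (φ' (φ n)) = g.lab n
    rw [h2.lab_eq _ (Set.notMem_empty _), h1.lab_eq _ (Set.notMem_empty _)]
  · intro n _ i hi hi'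
    show φ' (φ (g.suc n ⟨i, hi⟩)) = k.suc (φ' (φ n)) ⟨i, hi'⟩
    rw [h1.suc_eq n (Set.notMem_empty _) i hi ((h1.ar_eq n).symm ▸ hi),
      h2.suc_eq (φ n) (Set.notMem_empty _) i ((h1.ar_eq n).symm ▸ hi) hi']

theorem iso_trans {g : TermGraph S N} {h : TermGraph S M} {k : TermGraph S K}
    (h1 : Iso g h) (h2 : Iso h k) : Iso g k := by
  obtain ⟨φ, ψ, hφ, hψ, hψφ, hφψ⟩ := h1
  obtain ⟨φ', ψ', hφ', hψ', hψφ', hφψ'⟩ := h2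
  refine ⟨φ' ∘ φ, ψ ∘ ψ', hφ.comp hφ', hψ'.comp hψ, ?_, ?_⟩
  · intro n; show ψ (ψ' (φ' (φ n))) = n; rw [hψφ', hψφ]
  · intro m; show φ' (φ (ψ (ψ' m))) = m; rw [hφψ, hφψ']

theorem Iso.isFringe {g : TermGraph S.bot N} {h : TermGraph S.bot M}
    {φ : N → M} {ψ : M → N}
    (hφ : IsDHom ∅ g h φ) (hψ : IsDHom ∅ h g ψ) (hψφ : ∀ n, ψ (φ n) = n)
    (hφψ : ∀ m, φ (ψ m) = m) {d : ℕ} {n : N} {i : ℕ}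
    (hf : g.IsFringe d (n, i)) : h.IsFringe d (φ n, i) := by
  unfold IsFringe at hf ⊢
  by_cases hd : d = 0
  · rw [if_pos hd] at hf ⊢
    rw [Prod.ext_iff] at hf
    obtain ⟨h1, h2⟩ := hf
    simp only [Prod.mk.injEq]
    exact ⟨by rw [show n = g.root from h1, hφ.root_eq], h2⟩
  · rw [if_neg hd] at hf ⊢
    obtain ⟨hret, hlt, hcond⟩ := hf
    refine ⟨Iso.retained hφ hψ hψφ hφψ hret, (hφ.ar_eq n).symm ▸ hlt, ?_⟩
    have hsuc : h.suc (φ n) ⟨i, (hφ.ar_eq n).symm ▸ hlt⟩ = φ (g.suc n ⟨i, hlt⟩) :=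
      (hφ.suc_eq' n ⟨i, hlt⟩).symm
    rcases hcond with hc | ⟨hdep, hpred⟩
    · left
      rw [hsuc, Iso.retained_iff hφ hψ hψφ hφψ]
      exact hc
    · right
      refine ⟨by rwa [Iso.depth_eq hφ hψ hψφ], ?_⟩
      rw [hsuc, Iso.acyPred_iff hφ hψ hψφ hφψ]
      exact hpred

theorem Iso.isFringe_iff {g : TermGraph S.bot N} {h : TermGraph S.bot M}
    {φ : N → M} {ψ : M → N}
    (hφ : IsDHom ∅ g h φ) (hψ : IsDHom ∅ h g ψ) (hψφ : ∀ n, ψ (φ n) = n)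
    (hφψ : ∀ m, φ (ψ m) = m) {d : ℕ} {n : N} {i : ℕ} :
    h.IsFringe d (φ n, i) ↔ g.IsFringe d (n, i) := by
  constructor
  · intro hf
    have := Iso.isFringe hψ hφ hφψ hψφ hf
    rwa [hψφ] at this
  · exact Iso.isFringe hφ hψ hψφ hφψ

/-- The node map on truncations induced by an isomorphism. -/
noncomputable def truncMap {g : TermGraph S.bot N} {h : TermGraph S.bot M}
    {φ : N → M} {ψ : M → N}
    (hφ : IsDHom ∅ g h φ) (hψ : IsDHom ∅ h g ψ) (hψφ : ∀ n, ψ (φ n) = n)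
    (hφψ : ∀ m, φ (ψ m) = m) (d : ℕ) : TNode g d → TNode h d := fun x =>
  match x with
  | ⟨Sum.inl n, hn⟩ => ⟨Sum.inl (φ n), Iso.retained hφ hψ hψφ hφψ hn⟩
  | ⟨Sum.inr (n, i), hf⟩ => ⟨Sum.inr (φ n, i), Iso.isFringe hφ hψ hψφ hφψ hf⟩

theorem truncMap_isDHom {g : TermGraph S.bot N} {h : TermGraph S.bot M}
    {φ : N → M} {ψ : M → N}
    (hφ : IsDHom ∅ g h φ) (hψ : IsDHom ∅ h g ψ) (hψφ : ∀ n, ψ (φ n) = n)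
    (hφψ : ∀ m, φ (ψ m) = m) (d : ℕ) :
    IsDHom ∅ (g.trunc d) (h.trunc d) (truncMap hφ hψ hψφ hφψ d) := by
  refine ⟨?_, ?_, ?_⟩
  · show truncMap hφ hψ hψφ hφψ d (truncRoot g d) = truncRoot h d
    unfold truncRoot
    by_cases hd : d = 0
    · rw [dif_pos hd, dif_pos hd]
      simp only [truncMap]
      refine Subtype.ext ?_
      show Sum.inr (φ g.root, 0) = Sum.inr (h.root, 0)
      rw [hφ.root_eq]
    · rw [dif_neg hd, dif_neg hd]
      simp only [truncMap]
      refine Subtype.ext ?_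
      show Sum.inl (φ g.root) = Sum.inl h.root
      rw [hφ.root_eq]
  · rintro ⟨x, hx⟩ _
    rcases x with n | ⟨n, i⟩
    · show (h.trunc d).lab ⟨Sum.inl (φ n), _⟩ = (g.trunc d).lab ⟨Sum.inl n, hx⟩
      show h.lab (φ n) = g.lab n
      exact hφ.lab_eq n (Set.notMem_empty _)
    · rfl
  · rintro ⟨x, hx⟩ _ i hi hi'
    rcases x with n | ⟨n, j⟩
    · -- successors of a retained node
      have hlab : (g.trunc d).lab ⟨Sum.inl n, hx⟩ = g.lab n := rfl
      by_cases hf : g.IsFringe d (n, i)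
      · show truncMap hφ hψ hψφ hφψ d (truncSuc g d ⟨Sum.inl n, hx⟩ ⟨i, hi⟩) =
          truncSuc h d ⟨Sum.inl (φ n), _⟩ ⟨i, hi'⟩
        rw [show truncSuc g d ⟨Sum.inl n, hx⟩ ⟨i, hi⟩ = ⟨Sum.inr (n, i), hf⟩ from
          dif_pos hf]
        rw [show truncSuc h d ⟨Sum.inl (φ n), Iso.retained hφ hψ hψφ hφψ hx⟩ ⟨i, hi'⟩ =
          ⟨Sum.inr (φ n, i), Iso.isFringe hφ hψ hψφ hφψ hf⟩ from
          dif_pos (Iso.isFringe hφ hψ hψφ hφψ hf)]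
        rfl
      · show truncMap hφ hψ hψφ hφψ d (truncSuc g d ⟨Sum.inl n, hx⟩ ⟨i, hi⟩) =
          truncSuc h d ⟨Sum.inl (φ n), _⟩ ⟨i, hi'⟩
        rw [show truncSuc g d ⟨Sum.inl n, hx⟩ ⟨i, hi⟩ = ⟨Sum.inl (g.suc n ⟨i, hi⟩), _⟩ from
          dif_neg hf]
        have hf' : ¬ h.IsFringe d (φ n, i) := by
          rw [Iso.isFringe_iff hφ hψ hψφ hφψ]; exact hf
        rw [show truncSuc h d ⟨Sum.inl (φ n), Iso.retained hφ hψ hψφ hφψ hx⟩ ⟨i, hi'⟩ =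
          ⟨Sum.inl (h.suc (φ n) ⟨i, hi'⟩), _⟩ from dif_neg hf']
        simp only [truncMap]
        refine Subtype.ext ?_
        show Sum.inl (φ (g.suc n ⟨i, hi⟩)) = Sum.inl (h.suc (φ n) ⟨i, hi'⟩)
        rw [hφ.suc_eq n (Set.notMem_empty _) i hi hi']
    · exact absurd hi (Nat.not_lt_zero _)

theorem Iso.trunc {g : TermGraph S.bot N} {h : TermGraph S.bot M}
    (hi : Iso g h) (d : ℕ) : Iso (g.trunc d) (h.trunc d) := by
  obtain ⟨φ, ψ, hφ, hψ, hψφ, hφψ⟩ := hi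
  refine ⟨truncMap hφ hψ hψφ hφψ d, truncMap hψ hφ hφψ hψφ d,
    truncMap_isDHom hφ hψ hψφ hφψ d, truncMap_isDHom hψ hφ hφψ hψφ d, ?_, ?_⟩
  · rintro ⟨x, hx⟩
    rcases x with n | ⟨n, i⟩
    · exact Subtype.ext (by show Sum.inl (ψ (φ n)) = _; rw [hψφ])
    · exact Subtype.ext (by show Sum.inr (ψ (φ n), i) = _; rw [hψφ])
  · rintro ⟨x, hx⟩
    rcases x with n | ⟨n, i⟩
    · exact Subtype.ext (by show Sum.inl (φ (ψ n)) = _; rw [hφψ])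
    · exact Subtype.ext (by show Sum.inr (φ (ψ n), i) = _; rw [hφψ])

/-- Truncations at depth 0 are all isomorphic. -/
theorem trunc_zero_iso (g : TermGraph S.bot N) (h : TermGraph S.bot M) :
    Iso (g.trunc 0) (h.trunc 0) := by
  have hg : ∀ x : TNode g 0, x = truncRoot g 0 := by
    rintro ⟨x, hx⟩
    rcases x with n | p
    · exact absurd hx (not_retained_zero n)
    · have : g.IsFringe 0 p := hx
      unfold IsFringe at this
      rw [if_pos rfl] at this
      subst this
      exact Subtype.ext (by rw [show truncRoot g 0 = ⟨Sum.inr (g.root, 0), _⟩ from dif_pos rfl])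
  have hh : ∀ x : TNode h 0, x = truncRoot h 0 := by
    rintro ⟨x, hx⟩
    rcases x with n | p
    · exact absurd hx (not_retained_zero n)
    · have : h.IsFringe 0 p := hx
      unfold IsFringe at this
      rw [if_pos rfl] at this
      subst this
      exact Subtype.ext (by rw [show truncRoot h 0 = ⟨Sum.inr (h.root, 0), _⟩ from dif_pos rfl])
  have harg : ∀ (x : TNode g 0), S.bot.ar ((g.trunc 0).lab x) = 0 := by
    intro x
    rw [hg x]
    rw [show truncRoot g 0 = ⟨Sum.inr (g.root, 0), _⟩ from dif_pos rfl]
    rfl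
  have harh : ∀ (x : TNode h 0), S.bot.ar ((h.trunc 0).lab x) = 0 := by
    intro x
    rw [hh x]
    rw [show truncRoot h 0 = ⟨Sum.inr (h.root, 0), _⟩ from dif_pos rfl]
    rfl
  refine ⟨fun _ => truncRoot h 0, fun _ => truncRoot g 0, ⟨rfl, ?_, ?_⟩, ⟨rfl, ?_, ?_⟩,
    fun x => (hg x).symm, fun x => (hh x).symm⟩
  · intro n _
    rw [hg n]
    rw [show truncRoot g 0 = ⟨Sum.inr (g.root, 0), _⟩ from dif_pos rfl,
      show truncRoot h 0 = ⟨Sum.inr (h.root, 0), _⟩ from dif_pos rfl]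
    rfl
  · intro n _ i hi hi'
    exact absurd hi (by rw [harg n]; exact Nat.not_lt_zero i)
  · intro n _
    rw [hh n]
    rw [show truncRoot g 0 = ⟨Sum.inr (g.root, 0), _⟩ from dif_pos rfl,
      show truncRoot h 0 = ⟨Sum.inr (h.root, 0), _⟩ from dif_pos rfl]
    rfl
  · intro n _ i hi hi'
    exact absurd hi (by rw [harh n]; exact Nat.not_lt_zero i)

end TermGraph
end TGR
namespace TGR
namespace TermGraph

variable {S : Signature} {N : Type}

/-- Monotonicity of retained sets in the depth. -/
theorem retained_mono {g : TermGraph S N} {e d : ℕ} (hed : e ≤ d) {n : N}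
    (h : g.Retained e n) : g.Retained d n := by
  induction h with
  | shallow hdep => exact Retained.shallow (lt_of_lt_of_le hdep hed)
  | pred _ hm ih => exact ih.pred hm

section Trunc

variable (g : TermGraph S.bot N) (d : ℕ)

theorem trunc_root_eq (hd : d ≠ 0) (h : g.Retained d g.root) :
    (g.trunc d).root = ⟨Sum.inl g.root, h⟩ := by
  refine Subtype.ext ?_
  show (truncRoot g d).1 = Sum.inl g.root
  rw [truncRoot, dif_neg hd]

theorem trunc_suc_fringe {n : N} (hn : g.Retained d n) {i : ℕ}
    (hi : i < S.bot.ar (g.lab n)) (hf : g.IsFringe d (n, i)) :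
    (g.trunc d).suc ⟨Sum.inl n, hn⟩ ⟨i, hi⟩ = ⟨Sum.inr (n, i), hf⟩ := by
  refine Subtype.ext ?_
  show (truncSuc g d ⟨Sum.inl n, hn⟩ ⟨i, hi⟩).1 = Sum.inr (n, i)
  simp only [truncSuc]
  rw [dif_pos hf]

theorem trunc_suc_not_fringe {n : N} (hn : g.Retained d n) {i : ℕ}
    (hi : i < S.bot.ar (g.lab n)) (hf : ¬ g.IsFringe d (n, i))
    (hr : g.Retained d (g.suc n ⟨i, hi⟩)) :
    (g.trunc d).suc ⟨Sum.inl n, hn⟩ ⟨i, hi⟩ = ⟨Sum.inl (g.suc n ⟨i, hi⟩), hr⟩ := by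
  refine Subtype.ext ?_
  show (truncSuc g d ⟨Sum.inl n, hn⟩ ⟨i, hi⟩).1 = Sum.inl (g.suc n ⟨i, hi⟩)
  simp only [truncSuc]
  rw [dif_neg hf]

variable {g d}

/-- Fringe nodes have arity 0, so no position extends past them. -/
theorem trunc_no_extension (hd : d ≠ 0) {ρ π : List ℕ} {y x : TNode g d}
    {p : N × ℕ} (hy : (g.trunc d).IsPos ρ y) (hyv : y.1 = Sum.inr p)
    (hpre : ρ <+: π) (hx : (g.trunc d).IsPos π x) : ρ = π := by
  obtain ⟨τ, rfl⟩ := hpre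
  cases τ with
  | nil => simp
  | cons j τ' =>
    exfalso
    have hpre' : ρ ++ [j] <+: ρ ++ j :: τ' := by
      refine ⟨τ', by simp⟩
    obtain ⟨z, hz⟩ := isPos_prefix hx hpre'
    obtain ⟨m, hi, hbase, rfl⟩ := isPos_snoc hz
    obtain rfl := isPos_unique hbase hy
    obtain ⟨v, hv⟩ := m
    rcases v with n | p'
    · simp at hyv
    · exact Nat.not_lt_zero _ hi

/-- Projection: positions in the truncation are positions in `g`. -/
theorem trunc_isPos_proj (hd : d ≠ 0) {π : List ℕ} {x : TNode g d}
    (hp : (g.trunc d).IsPos π x) :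
    (∀ n, x.1 = Sum.inl n → g.IsPos π n) ∧
    (∀ n i, x.1 = Sum.inr (n, i) → ∃ σ, π = σ ++ [i] ∧ g.IsPos σ n ∧
      ∃ hn : g.Retained d n, (g.trunc d).IsPos σ ⟨Sum.inl n, hn⟩) := by
  induction hp with
  | root =>
    constructor
    · intro n hv
      have : (g.trunc d).root.1 = Sum.inl g.root := by
        show (truncRoot g d).1 = _
        rw [truncRoot, dif_neg hd]
      rw [this] at hv
      obtain rfl := (Sum.inl.injEq ..).mp hv
      exact IsPos.root
    · intro n i hv
      have : (g.trunc d).root.1 = Sum.inl g.root := by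
        show (truncRoot g d).1 = _
        rw [truncRoot, dif_neg hd]
      rw [this] at hv
      exact absurd hv (by simp)
  | @step π y hp i ih =>
    obtain ⟨v, hy⟩ := y
    rcases v with m | p
    · -- previous node is a retained node
      have hi : (i : ℕ) < S.bot.ar (g.lab m) := i.isLt
      by_cases hf : g.IsFringe d (m, (i : ℕ))
      · have hsuc : (g.trunc d).suc ⟨Sum.inl m, hy⟩ i = ⟨Sum.inr (m, (i : ℕ)), hf⟩ :=
          trunc_suc_fringe g d hy hi hf
        rw [hsuc]
        constructor
        · intro n hv; simp at hv
        · intro n j hv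
          simp only [Sum.inr.injEq, Prod.mk.injEq] at hv
          obtain ⟨rfl, rfl⟩ := hv
          exact ⟨π, rfl, ih.1 m rfl, hy, hp⟩
      · have hret : g.Retained d (g.suc m ⟨(i : ℕ), hi⟩) := by
          by_contra hc
          apply hf
          show g.IsFringe d (m, (i : ℕ))
          unfold IsFringe
          rw [if_neg hd]
          exact ⟨hy, hi, Or.inl hc⟩
        have hsuc : (g.trunc d).suc ⟨Sum.inl m, hy⟩ i =
            ⟨Sum.inl (g.suc m ⟨(i : ℕ), hi⟩), hret⟩ :=
          trunc_suc_not_fringe g d hy hi hf hret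
        rw [hsuc]
        constructor
        · intro n hv
          simp only [Sum.inl.injEq] at hv
          subst hv
          exact (ih.1 m rfl).step ⟨(i : ℕ), hi⟩
        · intro n j hv; simp at hv
    · exact absurd i.isLt (Nat.not_lt_zero _)

theorem trunc_isPos_proj_inl (hd : d ≠ 0) {π : List ℕ} {n : N} {hn : g.Retained d n}
    (hp : (g.trunc d).IsPos π ⟨Sum.inl n, hn⟩) : g.IsPos π n :=
  (trunc_isPos_proj hd hp).1 n rfl

/-- Every position in a truncation is a position in `g`. -/
theorem trunc_isPos_g (hd : d ≠ 0) {π : List ℕ} {x : TNode g d}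
    (hp : (g.trunc d).IsPos π x) : ∃ m, g.IsPos π m := by
  obtain ⟨v, hx⟩ := x
  rcases v with n | ⟨n, i⟩
  · exact ⟨n, (trunc_isPos_proj hd hp).1 n rfl⟩
  · obtain ⟨σ, rfl, hσ, -⟩ := (trunc_isPos_proj hd hp).2 n i rfl
    have hf : g.IsFringe d (n, i) := hx
    unfold IsFringe at hf
    rw [if_neg hd] at hf
    obtain ⟨-, hi, -⟩ := hf
    exact ⟨g.suc n ⟨i, hi⟩, hσ.step ⟨i, hi⟩⟩

/-- Lifting acyclicity: a `g`-acyclic position is acyclic in the truncation. -/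
theorem trunc_acyclic_lift (hd : d ≠ 0) {π : List ℕ}
    (ha : g.IsAcyclicPos π) : (g.trunc d).IsAcyclicPos π := by
  intro π₁ π₂ x h1 h2 p1 p2
  obtain ⟨v, hx⟩ := x
  rcases v with n | ⟨n, i⟩
  · exact ha π₁ π₂ n h1 h2 (trunc_isPos_proj_inl hd p1) (trunc_isPos_proj_inl hd p2)
  · obtain ⟨σ₁, rfl, hσ₁, -⟩ := (trunc_isPos_proj hd p1).2 n i rfl
    obtain ⟨σ₂, rfl, hσ₂, -⟩ := (trunc_isPos_proj hd p2).2 n i rfl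
    have hs1 : σ₁ <+: σ₂ := by
      rcases List.prefix_concat_iff.mp h1 with he | hp2
      · obtain ⟨h', -⟩ := List.append_inj' he rfl
        exact h' ▸ List.prefix_refl _
      · exact (List.prefix_append σ₁ [i]).trans hp2
    have : σ₁ = σ₂ := ha σ₁ σ₂ n hs1 ((List.prefix_append σ₂ [i]).trans h2) hσ₁ hσ₂
    rw [this]

/-- Projecting acyclicity for positions of retained nodes. -/
theorem trunc_acyclic_proj_inl (hd : d ≠ 0) {π : List ℕ} {n : N} {hn : g.Retained d n}
    (hp : (g.trunc d).IsPos π ⟨Sum.inl n, hn⟩) (ha : (g.trunc d).IsAcyclicPos π) :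
    g.IsAcyclicPos π := by
  intro π₁ π₂ m h1 h2 p1 p2
  obtain ⟨z₁, hz₁⟩ := isPos_prefix hp (h1.trans h2)
  obtain ⟨z₂, hz₂⟩ := isPos_prefix hp h2
  have hval : ∀ (π' : List ℕ) (z : TNode g d), π' <+: π → (g.trunc d).IsPos π' z →
      g.IsPos π' m → z.1 = Sum.inl m := by
    intro π' z hpre hz hm
    obtain ⟨v, hvz⟩ := z
    rcases v with k | p
    · have hk := (trunc_isPos_proj hd hz).1 k rfl
      show Sum.inl k = Sum.inl m
      exact congrArg _ (isPos_unique hk hm)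
    · exfalso
      have := trunc_no_extension hd hz rfl hpre hp
      subst this
      have heq := congrArg Subtype.val (isPos_unique hz hp)
      simp at heq
  have h1v := hval π₁ z₁ (h1.trans h2) hz₁ p1
  have h2v := hval π₂ z₂ h2 hz₂ p2
  have : z₁ = z₂ := Subtype.ext (h1v.trans h2v.symm)
  subst this
  exact ha π₁ π₂ z₁ h1 h2 hz₁ hz₂

end Trunc

end TermGraph
end TGR
namespace TGR
namespace TermGraph

variable {S : Signature} {N : Type}

section Trunc2

variable {g : TermGraph S.bot N} {d : ℕ}

/-- Acyclic positions of retained nodes lift to the truncation. -/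
theorem trunc_isPos_lift (hd : d ≠ 0) {π : List ℕ} {n : N}
    (hπ : g.IsPos π n) (ha : g.IsAcyclicPos π) (hn : g.Retained d n) :
    (g.trunc d).IsPos π ⟨Sum.inl n, hn⟩ := by
  induction hπ with
  | root =>
    rw [show (⟨Sum.inl g.root, hn⟩ : TNode g d) = (g.trunc d).root from
      (trunc_root_eq g d hd hn).symm]
    exact IsPos.root
  | @step π m hπ i ih =>
    have hpos : g.IsPos (π ++ [(i : ℕ)]) (g.suc m i) := hπ.step i
    have hmem : m ∈ g.acyPred (g.suc m i) := ⟨π, (i : ℕ), ⟨by simpa using hpos, ha⟩, hπ⟩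
    have hm : g.Retained d m := hn.pred hmem
    have hπa : g.IsAcyclicPos π := ha.prefix (List.prefix_append _ _)
    have ihp := ih hπa hm
    have hnf : ¬ g.IsFringe d (m, (i : ℕ)) := by
      intro hf
      unfold IsFringe at hf
      rw [if_neg hd] at hf
      obtain ⟨-, hlt, hc⟩ := hf
      rcases hc with hc | ⟨-, hc⟩
      · exact hc (by simpa using hn)
      · exact hc (by simpa using hmem)
    have hsuc : (g.trunc d).suc ⟨Sum.inl m, hm⟩ ⟨(i : ℕ), i.isLt⟩ =
        ⟨Sum.inl (g.suc m i), hn⟩ := by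
      have h1 := trunc_suc_not_fringe g d hm i.isLt hnf (by simpa using hn)
      rw [h1]
    have := ihp.step ⟨(i : ℕ), i.isLt⟩
    rw [hsuc] at this
    exact this

/-- Retained nodes have acyclic positions. -/
theorem retained_exists_acyclic (hR : g.Reachable) {n : N}
    (hn : g.Retained d n) : ∃ π, g.IsPos π n ∧ g.IsAcyclicPos π := by
  induction hn with
  | @shallow n hdep =>
    obtain ⟨π, hπ, hlen⟩ := exists_isPos_depth (hR n)
    exact ⟨π, hπ, isAcyclicPos_of_min hπ hlen⟩
  | @pred n m hn hm ih =>
    obtain ⟨π, i, ⟨hp, ha⟩, hπ⟩ := hm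
    exact ⟨π, hπ, ha.prefix (List.prefix_append _ _)⟩

theorem trunc_depth_inl (hd : d ≠ 0) (hR : g.Reachable) {n : N}
    (hn : g.Retained d n) : (g.trunc d).depth ⟨Sum.inl n, hn⟩ = g.depth n := by
  refine le_antisymm ?_ ?_
  · obtain ⟨π, hπ, hlen⟩ := exists_isPos_depth (hR n)
    have ha := isAcyclicPos_of_min hπ hlen
    have := trunc_isPos_lift hd hπ ha hn
    exact hlen ▸ depth_le_length this
  · obtain ⟨ρ, hρ, hlen⟩ := exists_isPos_depth (g := g.trunc d)
      (by
        obtain ⟨π, hπ, hlen⟩ := exists_isPos_depth (hR n)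
        exact ⟨π, trunc_isPos_lift hd hπ (isAcyclicPos_of_min hπ hlen) hn⟩)
    have := trunc_isPos_proj_inl hd hρ
    exact hlen ▸ depth_le_length this

/-- Position of a fringe node. -/
theorem trunc_isPos_fringe {σ : List ℕ} {n : N} {i : ℕ} {hn : g.Retained d n}
    (hσ : (g.trunc d).IsPos σ ⟨Sum.inl n, hn⟩) (hf : g.IsFringe d (n, i))
    (hi : i < S.bot.ar (g.lab n)) :
    (g.trunc d).IsPos (σ ++ [i]) ⟨Sum.inr (n, i), hf⟩ := by
  have := hσ.step ⟨i, hi⟩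
  rw [trunc_suc_fringe g d hn hi hf] at this
  exact this

theorem trunc_depth_inr (hd : d ≠ 0) (hR : g.Reachable) {n : N} {i : ℕ}
    (hn : g.Retained d n) (hi : i < S.bot.ar (g.lab n))
    (hf : g.IsFringe d (n, i)) :
    (g.trunc d).depth ⟨Sum.inr (n, i), hf⟩ = g.depth n + 1 := by
  have hnep : ∃ σ, (g.trunc d).IsPos σ (⟨Sum.inl n, hn⟩ : TNode g d) ∧
      σ.length = g.depth n := by
    obtain ⟨π, hπ, hlen⟩ := exists_isPos_depth (hR n)
    exact ⟨π, trunc_isPos_lift hd hπ (isAcyclicPos_of_min hπ hlen) hn,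
      hlen.trans rfl⟩
  obtain ⟨σ, hσ, hσlen⟩ := hnep
  refine le_antisymm ?_ ?_
  · have := trunc_isPos_fringe hσ hf hi
    have h2 := depth_le_length this
    simpa [hσlen] using h2
  · obtain ⟨ρ, hρ, hlen⟩ := exists_isPos_depth (g := g.trunc d)
      ⟨σ ++ [i], trunc_isPos_fringe hσ hf hi⟩
    obtain ⟨τ, hτeq, hτ, hnn, hτp⟩ := (trunc_isPos_proj hd hρ).2 n i rfl
    have h3 : g.depth n ≤ τ.length := by
      rw [← trunc_depth_inl hd hR hnn]
      exact depth_le_length hτp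
    have : ρ.length = τ.length + 1 := by rw [hτeq]; simp
    omega

/-- Acyclic positions of a retained node in the truncation are
exactly its acyclic positions in `g`. -/
theorem trunc_nodePosAcy_inl (hd : d ≠ 0) (hR : g.Reachable) {n : N}
    (hn : g.Retained d n) :
    (g.trunc d).nodePosAcy ⟨Sum.inl n, hn⟩ = g.nodePosAcy n := by
  ext π
  constructor
  · rintro ⟨hp, ha⟩
    exact ⟨trunc_isPos_proj_inl hd hp, trunc_acyclic_proj_inl hd hp ha⟩
  · rintro ⟨hp, ha⟩
    exact ⟨trunc_isPos_lift hd hp ha hn, trunc_acyclic_lift hd ha⟩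

/-- Acyclic predecessors of retained nodes in the truncation. -/
theorem trunc_acyPred_of_inl (hd : d ≠ 0) {x : TNode g d} {n : N}
    {hn : g.Retained d n} (hx : x ∈ (g.trunc d).acyPred ⟨Sum.inl n, hn⟩) :
    ∃ (m : N) (hm : g.Retained d m), x = ⟨Sum.inl m, hm⟩ ∧ m ∈ g.acyPred n := by
  obtain ⟨π, i, ⟨hpa, ha⟩, hpx⟩ := hx
  obtain ⟨y, hi, hbase, hyeq⟩ := isPos_snoc hpa
  obtain rfl := isPos_unique hpx hbase
  obtain ⟨v, hv⟩ := x
  rcases v with m | p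
  · refine ⟨m, hv, rfl, π, i, ⟨?_, ?_⟩, (trunc_isPos_proj hd hbase).1 m rfl⟩
    · exact (trunc_isPos_proj hd hpa).1 n rfl
    · exact trunc_acyclic_proj_inl hd hpa ha
  · exact absurd hi (Nat.not_lt_zero _)

theorem trunc_acyPred_inl_of (hd : d ≠ 0) (hR : g.Reachable) {m n : N}
    (hmem : m ∈ g.acyPred n) (hn : g.Retained d n) (hm : g.Retained d m) :
    (⟨Sum.inl m, hm⟩ : TNode g d) ∈ (g.trunc d).acyPred ⟨Sum.inl n, hn⟩ := by
  obtain ⟨π, i, ⟨hp, ha⟩, hπ⟩ := hmem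
  refine ⟨π, i, ?_, ?_⟩
  · rw [trunc_nodePosAcy_inl hd hR hn]
    exact ⟨hp, ha⟩
  · have hlift : (g.trunc d).IsPos (π ++ [i]) ⟨Sum.inl n, hn⟩ :=
      trunc_isPos_lift hd hp ha hn
    obtain ⟨z, hz⟩ := isPos_prefix hlift (List.prefix_append _ _)
    obtain ⟨v, hv⟩ := z
    rcases v with k | p
    · have hk := (trunc_isPos_proj hd hz).1 k rfl
      obtain rfl := isPos_unique hk hπ
      exact hz
    · exfalso
      have hext := trunc_no_extension hd hz rfl (List.prefix_append _ _) hlift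
      simp at hext
  
theorem trunc_acyPred_of_inr (hd : d ≠ 0) {x : TNode g d} {n : N} {i : ℕ}
    {hf : Sum.elim (g.Retained d) (g.IsFringe d) (Sum.inr (n, i))}
    (hx : x ∈ (g.trunc d).acyPred ⟨Sum.inr (n, i), hf⟩) : x.1 = Sum.inl n := by
  obtain ⟨π, j, ⟨hpa, ha⟩, hpx⟩ := hx
  obtain ⟨y, hj, hbase, hyeq⟩ := isPos_snoc hpa
  obtain rfl := isPos_unique hpx hbase
  obtain ⟨v, hv⟩ := x
  rcases v with m | p
  · -- y = ⟨inl m⟩, suc is the fringe node, so m = n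
    by_cases hfm : g.IsFringe d (m, j)
    · have := trunc_suc_fringe g d hv hj hfm
      rw [this] at hyeq
      have := congrArg Subtype.val hyeq
      simp only [Sum.inr.injEq, Prod.mk.injEq] at this
      obtain ⟨rfl, rfl⟩ := this
      rfl
    · have hret : g.Retained d (g.suc m ⟨j, hj⟩) := by
        by_contra hc
        apply hfm
        show g.IsFringe d (m, j)
        unfold IsFringe
        rw [if_neg hd]
        exact ⟨hv, hj, Or.inl hc⟩
      have := trunc_suc_not_fringe g d hv hj hfm hret
      rw [this] at hyeq
      have := congrArg Subtype.val hyeq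
      simp at this
  · exact absurd hj (Nat.not_lt_zero _)

/-- `σ ++ [i]` is acyclic in the truncation whenever `σ` is a `g`-acyclic
position of the retained node `n`. -/
theorem trunc_snoc_acyclic (hd : d ≠ 0) {σ : List ℕ} {n : N} {i : ℕ}
    {hn : g.Retained d n} (hσ : (g.trunc d).IsPos σ ⟨Sum.inl n, hn⟩)
    (ha : g.IsAcyclicPos σ) (hf : g.IsFringe d (n, i))
    (hi : i < S.bot.ar (g.lab n)) :
    (g.trunc d).IsAcyclicPos (σ ++ [i]) := by
  have hfp := trunc_isPos_fringe hσ hf hi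
  intro π₁ π₂ x h1 h2 p1 p2
  rcases List.prefix_concat_iff.mp h2 with rfl | hp2
  · -- π₂ = σ ++ [i] : node is the fringe node
    obtain rfl := isPos_unique p2 hfp
    rcases List.prefix_concat_iff.mp h1 with rfl | hp1
    · rfl
    · exfalso
      have hext := trunc_no_extension hd p1 rfl hp1 hσ
      subst hext
      have := congrArg Subtype.val (isPos_unique p1 hσ)
      simp at this
  · exact trunc_acyclic_lift hd ha π₁ π₂ x h1 hp2 p1 p2

theorem trunc_inl_mem_acyPred_inr (hd : d ≠ 0) (hR : g.Reachable) {n : N} {i : ℕ}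
    (hn : g.Retained d n) (hi : i < S.bot.ar (g.lab n))
    (hf : g.IsFringe d (n, i)) :
    (⟨Sum.inl n, hn⟩ : TNode g d) ∈ (g.trunc d).acyPred ⟨Sum.inr (n, i), hf⟩ := by
  obtain ⟨σ, hσ, ha⟩ := retained_exists_acyclic hR hn
  have hσ' := trunc_isPos_lift hd hσ ha hn
  exact ⟨σ, i, ⟨trunc_isPos_fringe hσ' hf hi, trunc_snoc_acyclic hd hσ' ha hf hi⟩, hσ'⟩

end Trunc2

end TermGraph
end TGR
namespace TGR
namespace TermGraph

variable {S : Signature} {N : Type}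

section Trunc3

variable {g : TermGraph S.bot N} {d e : ℕ}

theorem isFringe_elim (hd : d ≠ 0) {n : N} {i : ℕ} (hf : g.IsFringe d (n, i)) :
    g.Retained d n ∧ i < S.bot.ar (g.lab n) := by
  unfold IsFringe at hf
  rw [if_neg hd] at hf
  obtain ⟨h1, h2, -⟩ := hf
  exact ⟨h1, h2⟩

theorem trunc_retained_inl (hd : d ≠ 0) (hR : g.Reachable) (hed : e ≤ d) {n : N}
    (h : g.Retained e n) :
    ∀ hn : g.Retained d n, (g.trunc d).Retained e ⟨Sum.inl n, hn⟩ := by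
  induction h with
  | @shallow n hdep =>
    intro hn
    exact Retained.shallow (by rwa [trunc_depth_inl hd hR hn])
  | @pred n m hnr hm ih =>
    intro hmr
    have hnd : g.Retained d n := retained_mono hed hnr
    exact ((ih hnd).pred (trunc_acyPred_inl_of hd hR hm hnd hmr))

theorem trunc_retained_cases (hd : d ≠ 0) (hR : g.Reachable) {x : TNode g d}
    (h : (g.trunc d).Retained e x) :
    (∃ n hn, x = ⟨Sum.inl n, hn⟩ ∧ g.Retained e n) ∨
    (∃ n i hni, x = ⟨Sum.inr (n, i), hni⟩ ∧ g.depth n + 1 < e ∧ g.Retained e n) := by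
  induction h with
  | @shallow x hdep =>
    obtain ⟨v, hv⟩ := x
    rcases v with n | ⟨n, i⟩
    · exact Or.inl ⟨n, hv, rfl,
        Retained.shallow (by rwa [trunc_depth_inl hd hR hv] at hdep)⟩
    · right
      have hfr : g.IsFringe d (n, i) := hv
      obtain ⟨hnr, hilt⟩ := isFringe_elim hd hfr
      have hdep' : g.depth n + 1 < e := by
        rwa [trunc_depth_inr hd hR hnr hilt hv] at hdep
      exact ⟨n, i, hv, rfl, hdep', Retained.shallow (by omega)⟩
  | @pred x m hx hm ih =>
    rcases ih with ⟨n, hn, rfl, hne⟩ | ⟨n, i, hni, rfl, hdepth, hne⟩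
    · obtain ⟨m', hm', rfl, hmem⟩ := trunc_acyPred_of_inl hd hm
      exact Or.inl ⟨m', hm', rfl, hne.pred hmem⟩
    · have hv := trunc_acyPred_of_inr hd hm
      left
      refine ⟨n, ?_, Subtype.ext hv, hne⟩
      rw [← hv]
      exact m.2

theorem trunc_retained_inl_iff (hd : d ≠ 0) (hR : g.Reachable) (hed : e ≤ d) {n : N}
    (hn : g.Retained d n) :
    (g.trunc d).Retained e ⟨Sum.inl n, hn⟩ ↔ g.Retained e n := by
  constructor
  · intro h
    rcases trunc_retained_cases hd hR h with ⟨n', hn', heq, hne⟩ | ⟨n', i', hni', heq, -⟩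
    · have := congrArg Subtype.val heq
      simp only [Sum.inl.injEq] at this
      exact this ▸ hne
    · have := congrArg Subtype.val heq
      simp at this
  · intro h
    exact trunc_retained_inl hd hR hed h hn

theorem trunc_retained_inr_iff (hd : d ≠ 0) (hR : g.Reachable) {n : N} {i : ℕ}
    (hni : g.IsFringe d (n, i)) :
    (g.trunc d).Retained e (⟨Sum.inr (n, i), hni⟩ : TNode g d) ↔ g.depth n + 1 < e := by
  constructor
  · intro h
    rcases trunc_retained_cases hd hR h with ⟨n', hn', heq, -⟩ | ⟨n', i', hni', heq, hdep, -⟩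
    · have := congrArg Subtype.val heq
      simp at this
    · have := congrArg Subtype.val heq
      simp only [Sum.inr.injEq, Prod.mk.injEq] at this
      obtain ⟨rfl, rfl⟩ := this
      exact hdep
  · intro h
    obtain ⟨hnr, hilt⟩ := isFringe_elim hd hni
    exact Retained.shallow (by rwa [trunc_depth_inr hd hR hnr hilt hni])

theorem fringe_mono (hed : e ≤ d) (he : e ≠ 0) {n : N} {j : ℕ}
    (hf : g.IsFringe d (n, j)) (hne : g.Retained e n) : g.IsFringe e (n, j) := by
  have hd : d ≠ 0 := by omega
  unfold IsFringe at hf ⊢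
  rw [if_neg hd] at hf
  rw [if_neg he]
  obtain ⟨hnr, hj, hc⟩ := hf
  refine ⟨hne, hj, ?_⟩
  rcases hc with hc | ⟨h1, h2⟩
  · exact Or.inl (fun hre => hc (retained_mono hed hre))
  · exact Or.inr ⟨by omega, h2⟩

/-- Characterization of fringe pairs of the double truncation, first case:
the pair was already a fringe pair at depth `d`. -/
theorem trunc_fringe_fd_iff (hd : d ≠ 0) (he : e ≠ 0) (hed : e ≤ d)
    (hR : g.Reachable) {n : N} {j : ℕ} (hn : g.Retained d n)
    (hfd : g.IsFringe d (n, j)) :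
    (g.trunc d).IsFringe e (⟨Sum.inl n, hn⟩, j) ↔
      (g.Retained e n ∧ ¬ (g.depth n + 1 < e)) := by
  obtain ⟨-, hj⟩ := isFringe_elim hd hfd
  unfold IsFringe
  rw [if_neg he]
  constructor
  · rintro ⟨hret, hj', hc⟩
    have hne : g.Retained e n := (trunc_retained_inl_iff hd hR hed hn).mp hret
    refine ⟨hne, ?_⟩
    erw [show (g.trunc d).suc ⟨Sum.inl n, hn⟩ ⟨j, hj'⟩ = ⟨Sum.inr (n, j), hfd⟩ from
      trunc_suc_fringe g d hn hj hfd] at hc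
    rcases hc with hc | ⟨-, hc⟩
    · intro hdep
      exact hc ((trunc_retained_inr_iff hd hR hfd).mpr hdep)
    · exact absurd (trunc_inl_mem_acyPred_inr hd hR hn hj hfd) hc
  · rintro ⟨hne, hnd⟩
    refine ⟨trunc_retained_inl hd hR hed hne hn, hj, Or.inl ?_⟩
    erw [show (g.trunc d).suc ⟨Sum.inl n, hn⟩ ⟨j, hj⟩ = ⟨Sum.inr (n, j), hfd⟩ from
      trunc_suc_fringe g d hn hj hfd]
    intro hret
    exact hnd ((trunc_retained_inr_iff hd hR hfd).mp hret)

/-- Characterization of fringe pairs of the double truncation, second case: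
the pair was not a fringe pair at depth `d`. -/
theorem trunc_fringe_nfd_iff (hd : d ≠ 0) (he : e ≠ 0) (hed : e ≤ d)
    (hR : g.Reachable) {n : N} {j : ℕ} (hn : g.Retained d n)
    (hj : j < S.bot.ar (g.lab n)) (hnfd : ¬ g.IsFringe d (n, j)) :
    (g.trunc d).IsFringe e (⟨Sum.inl n, hn⟩, j) ↔ g.IsFringe e (n, j) := by
  have hrs : g.Retained d (g.suc n ⟨j, hj⟩) := by
    by_contra hc
    apply hnfd
    show g.IsFringe d (n, j)
    unfold IsFringe
    rw [if_neg hd]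
    exact ⟨hn, hj, Or.inl hc⟩
  have hsuc : (g.trunc d).suc ⟨Sum.inl n, hn⟩ ⟨j, hj⟩ =
      ⟨Sum.inl (g.suc n ⟨j, hj⟩), hrs⟩ := trunc_suc_not_fringe g d hn hj hnfd hrs
  unfold IsFringe
  rw [if_neg he, if_neg he]
  constructor
  · rintro ⟨hret, hj', hc⟩
    have hne : g.Retained e n := (trunc_retained_inl_iff hd hR hed hn).mp hret
    refine ⟨hne, hj, ?_⟩
    erw [hsuc] at hc
    rcases hc with hc | ⟨h1, h2⟩
    · refine Or.inl (fun hre => hc ?_)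
      exact trunc_retained_inl hd hR hed hre hrs
    · refine Or.inr ⟨by erw [trunc_depth_inl hd hR hn] at h1; exact h1, fun hmem => h2 ?_⟩
      exact trunc_acyPred_inl_of hd hR hmem hrs hn
  · rintro ⟨hne, hj2, hc⟩
    refine ⟨trunc_retained_inl hd hR hed hne hn, hj, ?_⟩
    erw [hsuc]
    rcases hc with hc | ⟨h1, h2⟩
    · refine Or.inl (fun hre => hc ?_)
      exact (trunc_retained_inl_iff hd hR hed hrs).mp hre
    · refine Or.inr ⟨by erw [trunc_depth_inl hd hR hn]; exact h1, fun hmem => ?_⟩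
      obtain ⟨m', hm', heq, hmem'⟩ := trunc_acyPred_of_inl hd hmem
      have := congrArg Subtype.val heq
      simp only [Sum.inl.injEq] at this
      exact h2 (this ▸ hmem')

end Trunc3

end TermGraph
end TGR
namespace TGR
namespace TermGraph

variable {S : Signature} {N M : Type}

theorem suc_congr {g : TermGraph S N} {x y : N} (hxy : x = y) {i : ℕ}
    (hi : i < S.ar (g.lab x)) (hi' : i < S.ar (g.lab y)) :
    g.suc x ⟨i, hi⟩ = g.suc y ⟨i, hi'⟩ := by subst hxy; rfl

/-- The inverse of a bijective homomorphism is a homomorphism. -/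
theorem isDHom_inverse {g : TermGraph S N} {h : TermGraph S M} {φ : N → M} {ψ : M → N}
    (hφ : IsDHom ∅ g h φ) (hψφ : ∀ n, ψ (φ n) = n) (hφψ : ∀ m, φ (ψ m) = m) :
    IsDHom ∅ h g ψ := by
  refine ⟨?_, ?_, ?_⟩
  · rw [← hφ.root_eq, hψφ]
  · intro m _
    have := hφ.lab_eq (ψ m) (Set.notMem_empty _)
    rw [hφψ] at this
    exact this.symm
  · intro m _ i hi hi'
    have hi'' : i < S.ar (h.lab (φ (ψ m))) := by rw [hφψ]; exact hi
    have h1 : h.suc m ⟨i, hi⟩ = h.suc (φ (ψ m)) ⟨i, hi''⟩ :=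
      suc_congr (hφψ m).symm hi hi''
    have h2 := hφ.suc_eq (ψ m) (Set.notMem_empty _) i hi' hi''
    rw [h1, ← h2, hψφ]

section DblTrunc

variable {g : TermGraph S.bot N} {d e : ℕ}

theorem dbl_ret_inl (hd : d ≠ 0) (hR : g.Reachable) (hed : e ≤ d) {n : N}
    {hn : g.Retained d n}
    (hx : (g.trunc d).Retained e (⟨Sum.inl n, hn⟩ : TNode g d)) : g.Retained e n :=
  (trunc_retained_inl_iff hd hR hed hn).mp hx

theorem dbl_fr_inr (hd : d ≠ 0) (he : e ≠ 0) (hed : e ≤ d) (hR : g.Reachable)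
    {n : N} {i : ℕ} {hni : g.IsFringe d (n, i)}
    (hx : (g.trunc d).Retained e (⟨Sum.inr (n, i), hni⟩ : TNode g d)) :
    g.IsFringe e (n, i) := by
  have hdep := (trunc_retained_inr_iff hd hR hni).mp hx
  exact fringe_mono hed he hni (Retained.shallow (by omega))

theorem dbl_fr_inl (hd : d ≠ 0) (he : e ≠ 0) (hed : e ≤ d) (hR : g.Reachable)
    {n : N} {j : ℕ} {hn : g.Retained d n}
    (hx : (g.trunc d).IsFringe e (⟨Sum.inl n, hn⟩, j)) : g.IsFringe e (n, j) := by
  by_cases hfd : g.IsFringe d (n, j)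
  · obtain ⟨hne, hnsh⟩ := (trunc_fringe_fd_iff hd he hed hR hn hfd).mp hx
    exact fringe_mono hed he hfd hne
  · have hj : j < S.bot.ar (g.lab n) := (isFringe_elim he hx).2
    exact (trunc_fringe_nfd_iff hd he hed hR hn hj hfd).mp hx

/-- The forward node map of the double truncation isomorphism. -/
noncomputable def dblMap (hd : d ≠ 0) (he : e ≠ 0) (hed : e ≤ d) (hR : g.Reachable) :
    TNode (g.trunc d) e → TNode g e := fun x =>
  match x with
  | ⟨Sum.inl ⟨Sum.inl n, hn⟩, hx⟩ => ⟨Sum.inl n, dbl_ret_inl hd hR hed hx⟩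
  | ⟨Sum.inl ⟨Sum.inr (n, i), hni⟩, hx⟩ => ⟨Sum.inr (n, i), dbl_fr_inr hd he hed hR hx⟩
  | ⟨Sum.inr (⟨Sum.inl n, hn⟩, j), hx⟩ => ⟨Sum.inr (n, j), dbl_fr_inl hd he hed hR hx⟩
  | ⟨Sum.inr (⟨Sum.inr p, hp⟩, j), hx⟩ =>
      absurd (isFringe_elim he hx).2 (Nat.not_lt_zero _)

open Classical in
/-- The backward node map of the double truncation isomorphism. -/
noncomputable def dblInv (hd : d ≠ 0) (he : e ≠ 0) (hed : e ≤ d) (hR : g.Reachable) :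
    TNode g e → TNode (g.trunc d) e := fun x =>
  match x with
  | ⟨Sum.inl n, hn⟩ =>
      ⟨Sum.inl ⟨Sum.inl n, retained_mono hed hn⟩,
        trunc_retained_inl hd hR hed hn (retained_mono hed hn)⟩
  | ⟨Sum.inr (n, i), hf⟩ =>
      if hfd : g.IsFringe d (n, i) then
        (if hsh : g.depth n + 1 < e then
          ⟨Sum.inl ⟨Sum.inr (n, i), hfd⟩, (trunc_retained_inr_iff hd hR hfd).mpr hsh⟩
        else
          ⟨Sum.inr (⟨Sum.inl n, (isFringe_elim hd hfd).1⟩, i),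
            (trunc_fringe_fd_iff hd he hed hR (isFringe_elim hd hfd).1 hfd).mpr
              ⟨(isFringe_elim he hf).1, hsh⟩⟩)
      else
        ⟨Sum.inr (⟨Sum.inl n, retained_mono hed (isFringe_elim he hf).1⟩, i),
          (trunc_fringe_nfd_iff hd he hed hR
            (retained_mono hed (isFringe_elim he hf).1) (isFringe_elim he hf).2 hfd).mpr hf⟩

end DblTrunc

end TermGraph
end TGR
namespace TGR
namespace TermGraph

variable {S : Signature} {N : Type}

section DblTrunc2

variable {g : TermGraph S.bot N} {d e : ℕ}

theorem not_fringe_elim (he : e ≠ 0) {n : N} {i : ℕ} (hne : g.Retained e n)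
    (hi : i < S.bot.ar (g.lab n)) (hnf : ¬ g.IsFringe e (n, i)) :
    g.Retained e (g.suc n ⟨i, hi⟩) := by
  by_contra hc
  apply hnf
  show g.IsFringe e (n, i)
  unfold IsFringe
  rw [if_neg he]
  exact ⟨hne, hi, Or.inl hc⟩

theorem dblInv_dblMap (hd : d ≠ 0) (he : e ≠ 0) (hed : e ≤ d) (hR : g.Reachable) :
    ∀ x, dblInv hd he hed hR (dblMap hd he hed hR x) = x := by
  rintro ⟨v, hx⟩
  rcases v with y | ⟨y, j⟩
  · obtain ⟨w, hw⟩ := y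
    rcases w with n | ⟨n, i⟩
    · exact Subtype.ext (congrArg Sum.inl (Subtype.ext rfl))
    · have h1 : dblMap hd he hed hR ⟨Sum.inl ⟨Sum.inr (n, i), hw⟩, hx⟩ =
          ⟨Sum.inr (n, i), dbl_fr_inr hd he hed hR hx⟩ := rfl
      rw [h1]
      have hw' : g.IsFringe d (n, i) := hw
      have hsh : g.depth n + 1 < e := (trunc_retained_inr_iff hd hR hw').mp hx
      simp only [dblInv]
      rw [dif_pos hw', dif_pos hsh]
  · obtain ⟨w, hw⟩ := y
    rcases w with n | p
    · have h1 : dblMap hd he hed hR ⟨Sum.inr (⟨Sum.inl n, hw⟩, j), hx⟩ =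
          ⟨Sum.inr (n, j), dbl_fr_inl hd he hed hR hx⟩ := rfl
      rw [h1]
      simp only [dblInv]
      by_cases hfd : g.IsFringe d (n, j)
      · obtain ⟨hne, hnsh⟩ := (trunc_fringe_fd_iff hd he hed hR hw hfd).mp hx
        rw [dif_pos hfd, dif_neg hnsh]
      · rw [dif_neg hfd]
    · exact absurd (isFringe_elim he hx).2 (Nat.not_lt_zero _)

theorem dblMap_dblInv (hd : d ≠ 0) (he : e ≠ 0) (hed : e ≤ d) (hR : g.Reachable) :
    ∀ x, dblMap hd he hed hR (dblInv hd he hed hR x) = x := by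
  rintro ⟨v, hx⟩
  rcases v with n | ⟨n, i⟩
  · exact Subtype.ext rfl
  · simp only [dblInv]
    by_cases hfd : g.IsFringe d (n, i)
    · by_cases hsh : g.depth n + 1 < e
      · rw [dif_pos hfd, dif_pos hsh]
        exact Subtype.ext rfl
      · rw [dif_pos hfd, dif_neg hsh]
        exact Subtype.ext rfl
    · rw [dif_neg hfd]
      exact Subtype.ext rfl

theorem dblMap_isDHom (hd : d ≠ 0) (he : e ≠ 0) (hed : e ≤ d) (hR : g.Reachable) :
    IsDHom ∅ ((g.trunc d).trunc e) (g.trunc e) (dblMap hd he hed hR) := by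
  have hge : g.Retained e g.root :=
    Retained.shallow (lt_of_le_of_lt (depth_le_length IsPos.root) (Nat.pos_of_ne_zero he))
  have hgd : g.Retained d g.root := retained_mono hed hge
  have hre : (g.trunc d).Retained e (⟨Sum.inl g.root, hgd⟩ : TNode g d) :=
    trunc_retained_inl hd hR hed hge hgd
  refine ⟨?_, ?_, ?_⟩
  · -- roots
    have hGr : (g.trunc d).Retained e (g.trunc d).root := by
      rw [trunc_root_eq g d hd hgd]; exact hre
    have h1 : ((g.trunc d).trunc e).root = ⟨Sum.inl ⟨Sum.inl g.root, hgd⟩, hre⟩ := by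
      rw [trunc_root_eq (g.trunc d) e he hGr]
      exact Subtype.ext (congrArg Sum.inl (trunc_root_eq g d hd hgd))
    rw [h1, trunc_root_eq g e he hge]
    exact Subtype.ext rfl
  · -- labels
    rintro ⟨v, hx⟩ -
    rcases v with y | p
    · obtain ⟨w, hw⟩ := y
      rcases w with n | ⟨n, i⟩ <;> rfl
    · obtain ⟨y, j⟩ := p
      obtain ⟨w, hw⟩ := y
      rcases w with n | p'
      · rfl
      · exact absurd (isFringe_elim he hx).2 (Nat.not_lt_zero _)
  · -- successors
    rintro ⟨v, hx⟩ - i hi hi'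
    rcases v with y | p
    · obtain ⟨w, hw⟩ := y
      rcases w with n | ⟨n, k⟩
      · -- main case
        have hne : g.Retained e n := dbl_ret_inl hd hR hed hx
        by_cases hfe : (g.trunc d).IsFringe e (⟨Sum.inl n, hw⟩, i)
        · have hfg : g.IsFringe e (n, i) := dbl_fr_inl hd he hed hR hfe
          rw [trunc_suc_fringe (g.trunc d) e hx hi hfe]
          have h2 : dblMap hd he hed hR ⟨Sum.inr (⟨Sum.inl n, hw⟩, i), hfe⟩ =
              ⟨Sum.inr (n, i), dbl_fr_inl hd he hed hR hfe⟩ := rfl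
          rw [h2]
          have h3 : dblMap hd he hed hR ⟨Sum.inl ⟨Sum.inl n, hw⟩, hx⟩ =
              ⟨Sum.inl n, hne⟩ := rfl
          rw [show (g.trunc e).suc (dblMap hd he hed hR ⟨Sum.inl ⟨Sum.inl n, hw⟩, hx⟩)
              ⟨i, hi'⟩ = ⟨Sum.inr (n, i), hfg⟩ from trunc_suc_fringe g e hne hi' hfg]
        · by_cases hfd : g.IsFringe d (n, i)
          · -- d-fringe: successor in the inner truncation is a fringe node
            have hsh : g.depth n + 1 < e := by
              by_contra hnsh
              exact hfe ((trunc_fringe_fd_iff hd he hed hR hw hfd).mpr ⟨hne, hnsh⟩)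
            have hGsuc : (g.trunc d).suc ⟨Sum.inl n, hw⟩ ⟨i, hi⟩ =
                ⟨Sum.inr (n, i), hfd⟩ := trunc_suc_fringe g d hw hi hfd
            have hr' : (g.trunc d).Retained e (⟨Sum.inr (n, i), hfd⟩ : TNode g d) :=
              (trunc_retained_inr_iff hd hR hfd).mpr hsh
            have hr : (g.trunc d).Retained e ((g.trunc d).suc ⟨Sum.inl n, hw⟩ ⟨i, hi⟩) := by
              rw [hGsuc]; exact hr'
            rw [trunc_suc_not_fringe (g.trunc d) e hx hi hfe hr]
            rw [show (⟨Sum.inl ((g.trunc d).suc ⟨Sum.inl n, hw⟩ ⟨i, hi⟩), hr⟩ :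
                TNode (g.trunc d) e) = ⟨Sum.inl ⟨Sum.inr (n, i), hfd⟩, hr'⟩ from
              Subtype.ext (congrArg Sum.inl hGsuc)]
            have hfg : g.IsFringe e (n, i) := fringe_mono hed he hfd hne
            have h4 : dblMap hd he hed hR ⟨Sum.inl ⟨Sum.inr (n, i), hfd⟩, hr'⟩ =
                ⟨Sum.inr (n, i), dbl_fr_inr hd he hed hR hr'⟩ := rfl
            rw [h4, show (g.trunc e).suc (dblMap hd he hed hR ⟨Sum.inl ⟨Sum.inl n, hw⟩, hx⟩)
                ⟨i, hi'⟩ = ⟨Sum.inr (n, i), hfg⟩ from trunc_suc_fringe g e hne hi' hfg]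
          · -- not d-fringe
            have hrs : g.Retained d (g.suc n ⟨i, hi⟩) := by
              by_contra hc
              apply hfd
              show g.IsFringe d (n, i)
              unfold IsFringe
              rw [if_neg hd]
              exact ⟨hw, hi, Or.inl hc⟩
            have hGsuc : (g.trunc d).suc ⟨Sum.inl n, hw⟩ ⟨i, hi⟩ =
                ⟨Sum.inl (g.suc n ⟨i, hi⟩), hrs⟩ := trunc_suc_not_fringe g d hw hi hfd hrs
            have hnfe_g : ¬ g.IsFringe e (n, i) := fun hfg =>
              hfe ((trunc_fringe_nfd_iff hd he hed hR hw hi hfd).mpr hfg)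
            have hrsE : g.Retained e (g.suc n ⟨i, hi⟩) :=
              not_fringe_elim he hne hi hnfe_g
            have hre2 : (g.trunc d).Retained e
                (⟨Sum.inl (g.suc n ⟨i, hi⟩), hrs⟩ : TNode g d) :=
              trunc_retained_inl hd hR hed hrsE hrs
            have hr : (g.trunc d).Retained e ((g.trunc d).suc ⟨Sum.inl n, hw⟩ ⟨i, hi⟩) := by
              rw [hGsuc]; exact hre2
            rw [trunc_suc_not_fringe (g.trunc d) e hx hi hfe hr]
            rw [show (⟨Sum.inl ((g.trunc d).suc ⟨Sum.inl n, hw⟩ ⟨i, hi⟩), hr⟩ :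
                TNode (g.trunc d) e) = ⟨Sum.inl ⟨Sum.inl (g.suc n ⟨i, hi⟩), hrs⟩, hre2⟩ from
              Subtype.ext (congrArg Sum.inl hGsuc)]
            have h4 : dblMap hd he hed hR ⟨Sum.inl ⟨Sum.inl (g.suc n ⟨i, hi⟩), hrs⟩, hre2⟩ =
                ⟨Sum.inl (g.suc n ⟨i, hi⟩), dbl_ret_inl hd hR hed hre2⟩ := rfl
            rw [h4, show (g.trunc e).suc (dblMap hd he hed hR ⟨Sum.inl ⟨Sum.inl n, hw⟩, hx⟩)
                ⟨i, hi'⟩ = ⟨Sum.inl (g.suc n ⟨i, hi'⟩), not_fringe_elim he hne hi' hnfe_g⟩ from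
              trunc_suc_not_fringe g e hne hi' hnfe_g (not_fringe_elim he hne hi' hnfe_g)]
      · exact absurd hi (Nat.not_lt_zero _)
    · exact absurd hi (Nat.not_lt_zero _)

/-- Double truncation: `(g†d)†e ≅ g†e` for `e ≤ d`. -/
theorem trunc_trunc_iso (hd : d ≠ 0) (he : e ≠ 0) (hed : e ≤ d) (hR : g.Reachable) :
    Iso ((g.trunc d).trunc e) (g.trunc e) := by
  refine ⟨dblMap hd he hed hR, dblInv hd he hed hR, dblMap_isDHom hd he hed hR,
    isDHom_inverse (dblMap_isDHom hd he hed hR) (dblInv_dblMap hd he hed hR)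
      (dblMap_dblInv hd he hed hR),
    dblInv_dblMap hd he hed hR, dblMap_dblInv hd he hed hR⟩

end DblTrunc2

end TermGraph
end TGR
namespace TGR
namespace TermGraph

variable {S : Signature} {N M : Type}

theorem ext' {g h : TermGraph S N} (hlab : ∀ n, g.lab n = h.lab n)
    (hsuc : ∀ (n : N) (i : ℕ) (hi : i < S.ar (g.lab n)) (hi' : i < S.ar (h.lab n)),
      g.suc n ⟨i, hi⟩ = h.suc n ⟨i, hi'⟩)
    (hroot : g.root = h.root) : g = h := by
  obtain ⟨lab1, suc1, root1⟩ := g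
  obtain ⟨lab2, suc2, root2⟩ := h
  simp only at hlab hsuc hroot
  have hl : lab1 = lab2 := funext hlab
  subst hl
  have hs : suc1 = suc2 := by
    funext n i
    exact hsuc n i i.isLt i.isLt
  subst hs
  rw [hroot]

theorem nodeAt_eq {g : TermGraph S N} {π : List ℕ} {n : N} (h : g.IsPos π n) :
    g.nodeAt π = n := by
  unfold nodeAt
  rw [dif_pos ⟨n, h⟩]
  exact isPos_unique (Exists.choose_spec ⟨n, h⟩) h

theorem labAt_eq {g : TermGraph S N} {π : List ℕ} {n : N} (h : g.IsPos π n) :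
    g.labAt π = g.lab n := by
  unfold labAt
  rw [nodeAt_eq h]

/-- Positions shorter than the truncation depth survive in the truncation. -/
theorem trunc_isPos_of_lt {g : TermGraph S.bot N} {k : ℕ} {π : List ℕ} {n : N}
    (hp : g.IsPos π n) (hk : π.length < k) :
    ∃ hn : g.Retained k n, (g.trunc k).IsPos π ⟨Sum.inl n, hn⟩ := by
  have hk0 : k ≠ 0 := by omega
  induction hp with
  | root =>
    have hn : g.Retained k g.root :=
      Retained.shallow (lt_of_le_of_lt (depth_le_length IsPos.root) (by omega))
    refine ⟨hn, ?_⟩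
    rw [show (⟨Sum.inl g.root, hn⟩ : TNode g k) = (g.trunc k).root from
      (trunc_root_eq g k hk0 hn).symm]
    exact IsPos.root
  | @step π m hπ i ih =>
    have hlen : π.length < k := by simp at hk; omega
    obtain ⟨hm, ihp⟩ := ih hlen
    have hdm : g.depth m ≤ π.length := depth_le_length hπ
    have hds : g.depth (g.suc m i) ≤ π.length + 1 := by
      simpa using depth_le_length (hπ.step i)
    have hsret : g.Retained k (g.suc m i) := Retained.shallow (by simp at hk; omega)
    have hnf : ¬ g.IsFringe k (m, (i : ℕ)) := by
      intro hf
      unfold IsFringe at hf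
      rw [if_neg hk0] at hf
      obtain ⟨-, hlt, hc⟩ := hf
      rcases hc with hc | ⟨hc, -⟩
      · exact hc (by simpa using hsret)
      · have hc' : k - 1 ≤ g.depth m := hc
        simp at hk
        omega
    refine ⟨hsret, ?_⟩
    have := ihp.step ⟨(i : ℕ), i.isLt⟩
    rw [trunc_suc_not_fringe g k hm i.isLt hnf (by simpa using hsret)] at this
    exact this

/-- A short position in a truncation ends at a retained (inl) node. -/
theorem trunc_isPos_short_inl {g : TermGraph S.bot N} {k : ℕ} (hk0 : k ≠ 0)
    {π : List ℕ} {x : TNode g k}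
    (hp : (g.trunc k).IsPos π x) (hk : π.length < k) :
    ∃ n, x.1 = Sum.inl n ∧ g.IsPos π n := by
  obtain ⟨v, hx⟩ := x
  rcases v with n | ⟨n, i⟩
  · exact ⟨n, rfl, (trunc_isPos_proj hk0 hp).1 n rfl⟩
  · exfalso
    obtain ⟨σ, rfl, hσ, hn, hσp⟩ := (trunc_isPos_proj hk0 hp).2 n i rfl
    have hfr : g.IsFringe k (n, i) := hx
    unfold IsFringe at hfr
    rw [if_neg hk0] at hfr
    obtain ⟨-, hilt, hc⟩ := hfr
    have hσlen : σ.length + 1 < k := by simpa using hk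
    rcases hc with hc | ⟨hc, -⟩
    · refine hc (Retained.shallow ?_)
      show g.depth (g.suc n ⟨i, hilt⟩) < k
      have := depth_le_length (hσ.step ⟨i, hilt⟩)
      simp at this
      omega
    · have hc' : k - 1 ≤ g.depth n := hc
      have := depth_le_length hσ
      omega

end TermGraph

namespace CTG

variable {S : Signature} {N : Type}

open TermGraph

theorem aliasClass_eq {g : TermGraph S N} {π₀ : List ℕ} {n : N} (hp : g.IsPos π₀ n) :
    g.nodePos n = {π | g.Aliases π π₀} := by
  ext π
  constructor
  · intro hπ
    exact ⟨n, hπ, hp⟩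
  · rintro ⟨m, h1, h2⟩
    obtain rfl := isPos_unique h2 hp
    exact h1

/-- Canonical term graphs with the same positions, labelling and aliasing
are equal. -/
theorem ext_inv {g h : CTG S} (hpos : g.pos = h.pos)
    (hal : ∀ π π' : List ℕ, g.Aliases π π' ↔ h.Aliases π π')
    (hlab : ∀ π ∈ g.pos, g.labAt π = h.labAt π) : g = h := by
  -- every node has a position
  have gex : ∀ n : ↥g.nodes, ∃ π, g.tg.IsPos π n := fun n => g.reach n
  have hex : ∀ n : ↥h.nodes, ∃ π, h.tg.IsPos π n := fun n => h.reach n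
  -- the sets of nodes coincide
  have hnodes : g.nodes = h.nodes := by
    ext C
    constructor
    · intro hC
      obtain ⟨π₀, hπ₀⟩ := gex ⟨C, hC⟩
      have hπ₀p : π₀ ∈ h.pos := hpos ▸ ⟨_, hπ₀⟩
      obtain ⟨m, hm⟩ := hπ₀p
      have hCeq : C = h.tg.nodePos m := by
        have h1 : C = g.tg.nodePos ⟨C, hC⟩ := g.canon ⟨C, hC⟩
        rw [h1, aliasClass_eq hπ₀, aliasClass_eq hm]
        ext π
        exact hal π π₀
      rw [hCeq, ← h.canon m]
      exact m.2
    · intro hC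
      obtain ⟨π₀, hπ₀⟩ := hex ⟨C, hC⟩
      have hπ₀p : π₀ ∈ g.pos := hpos ▸ ⟨_, hπ₀⟩
      obtain ⟨m, hm⟩ := hπ₀p
      have hCeq : C = g.tg.nodePos m := by
        have h1 : C = h.tg.nodePos ⟨C, hC⟩ := h.canon ⟨C, hC⟩
        rw [h1, aliasClass_eq hπ₀, aliasClass_eq hm]
        ext π
        exact (hal π π₀).symm
      rw [hCeq, ← g.canon m]
      exact m.2
  -- destruct
  obtain ⟨gn, gt, gr, gc⟩ := g
  obtain ⟨hn, ht, hr, hc⟩ := h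
  have hnodes' : gn = hn := hnodes
  subst hnodes'
  -- membership gives positions in both graphs
  have hmem : ∀ (n : ↥gn) (π : List ℕ), gt.IsPos π n → ht.IsPos π n := by
    intro n π hπ
    have h1 : π ∈ (n : Set (List ℕ)) := by rw [gc n]; exact hπ
    have h2 := hc n
    rw [h2] at h1
    exact h1
  have hlabeq : ∀ n : ↥gn, gt.lab n = ht.lab n := by
    intro n
    obtain ⟨π₀, hπ₀⟩ := gex n
    have h1 : gt.labAt π₀ = gt.lab n := labAt_eq hπ₀
    have h2 : ht.labAt π₀ = ht.lab n := labAt_eq (hmem n π₀ hπ₀)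
    have h3 := hlab π₀ ⟨n, hπ₀⟩
    rw [← h1, ← h2]
    exact h3
  have htg : gt = ht := by
    refine TermGraph.ext' hlabeq ?_ ?_
    · intro n i hi hi'
      obtain ⟨π₀, hπ₀⟩ := gex n
      have hgs : gt.IsPos (π₀ ++ [i]) (gt.suc n ⟨i, hi⟩) := by
        simpa using hπ₀.step ⟨i, hi⟩
      have hhs : ht.IsPos (π₀ ++ [i]) (ht.suc n ⟨i, hi'⟩) := by
        simpa using (hmem n π₀ hπ₀).step ⟨i, hi'⟩
      refine Subtype.ext ?_
      rw [gc (gt.suc n ⟨i, hi⟩), hc (ht.suc n ⟨i, hi'⟩),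
        aliasClass_eq hgs, aliasClass_eq hhs]
      ext π
      exact hal π (π₀ ++ [i])
    · refine Subtype.ext ?_
      rw [gc gt.root, hc ht.root, aliasClass_eq (g := gt) IsPos.root,
        aliasClass_eq (g := ht) IsPos.root]
      ext π
      exact hal π []
  subst htg
  rfl

end CTG
end TGR
namespace TGR
namespace TermGraph

variable {S : Signature} {N M : Type}

theorem iso_pos_eq {g : TermGraph S N} {h : TermGraph S M} (hi : Iso g h) :
    g.pos = h.pos := by
  obtain ⟨φ, ψ, hφ, hψ, hψφ, hφψ⟩ := hi
  ext π
  exact ⟨fun ⟨n, hn⟩ => ⟨φ n, hφ.isPos hn⟩, fun ⟨m, hm⟩ => ⟨ψ m, hψ.isPos hm⟩⟩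

theorem iso_aliases {g : TermGraph S N} {h : TermGraph S M} (hi : Iso g h)
    (π π' : List ℕ) : g.Aliases π π' ↔ h.Aliases π π' := by
  obtain ⟨φ, ψ, hφ, hψ, hψφ, hφψ⟩ := hi
  constructor
  · rintro ⟨n, h1, h2⟩
    exact ⟨φ n, hφ.isPos h1, hφ.isPos h2⟩
  · rintro ⟨m, h1, h2⟩
    exact ⟨ψ m, hψ.isPos h1, hψ.isPos h2⟩

theorem iso_labAt {g : TermGraph S N} {h : TermGraph S M} (hi : Iso g h)
    {π : List ℕ} (hp : π ∈ g.pos) : g.labAt π = h.labAt π := by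
  obtain ⟨φ, ψ, hφ, hψ, hψφ, hφψ⟩ := hi
  obtain ⟨n, hn⟩ := hp
  rw [labAt_eq hn, labAt_eq (hφ.isPos hn)]
  exact (hφ.lab_eq n (Set.notMem_empty _)).symm

end TermGraph

namespace CTG

variable {S : Signature}

open TermGraph

/-- If all finite truncations are isomorphic then the canonical term graphs
are equal. -/
theorem eq_of_forall_trunc_iso {g h : CTG S.bot}
    (H : ∀ k : ℕ, Iso (g.tg.trunc k) (h.tg.trunc k)) : g = h := by
  refine ext_inv ?_ ?_ ?_
  · ext π
    constructor
    · rintro ⟨n, hn⟩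
      obtain ⟨hr, hp⟩ := trunc_isPos_of_lt hn (Nat.lt_succ_self π.length)
      have hp2 : π ∈ (h.tg.trunc (π.length + 1)).pos := by
        rw [← iso_pos_eq (H (π.length + 1))]
        exact ⟨_, hp⟩
      obtain ⟨x, hx⟩ := hp2
      exact trunc_isPos_g (by omega) hx
    · rintro ⟨n, hn⟩
      obtain ⟨hr, hp⟩ := trunc_isPos_of_lt hn (Nat.lt_succ_self π.length)
      have hp2 : π ∈ (g.tg.trunc (π.length + 1)).pos := by
        rw [iso_pos_eq (H (π.length + 1))]
        exact ⟨_, hp⟩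
      obtain ⟨x, hx⟩ := hp2
      exact trunc_isPos_g (by omega) hx
  · intro π π'
    constructor
    · rintro ⟨n, h1, h2⟩
      set k := max π.length π'.length + 1 with hk
      obtain ⟨hr1, hp1⟩ := trunc_isPos_of_lt h1 (show π.length < k by omega)
      obtain ⟨hr2, hp2⟩ := trunc_isPos_of_lt h2 (show π'.length < k by omega)
      have hali : (g.tg.trunc k).Aliases π π' := ⟨⟨Sum.inl n, hr1⟩, hp1, hp2⟩
      rw [iso_aliases (H k)] at hali
      obtain ⟨x, q1, q2⟩ := hali
      obtain ⟨m1, hv1, hm1⟩ := trunc_isPos_short_inl (by omega) q1 (by omega)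
      obtain ⟨m2, hv2, hm2⟩ := trunc_isPos_short_inl (by omega) q2 (by omega)
      have : m1 = m2 := by
        have := hv1.symm.trans hv2
        simpa using this
      exact ⟨m1, hm1, this ▸ hm2⟩
    · rintro ⟨n, h1, h2⟩
      set k := max π.length π'.length + 1 with hk
      obtain ⟨hr1, hp1⟩ := trunc_isPos_of_lt h1 (show π.length < k by omega)
      obtain ⟨hr2, hp2⟩ := trunc_isPos_of_lt h2 (show π'.length < k by omega)
      have hali : (h.tg.trunc k).Aliases π π' := ⟨⟨Sum.inl n, hr1⟩, hp1, hp2⟩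
      rw [← iso_aliases (H k)] at hali
      obtain ⟨x, q1, q2⟩ := hali
      obtain ⟨m1, hv1, hm1⟩ := trunc_isPos_short_inl (by omega) q1 (by omega)
      obtain ⟨m2, hv2, hm2⟩ := trunc_isPos_short_inl (by omega) q2 (by omega)
      have : m1 = m2 := by
        have := hv1.symm.trans hv2
        simpa using this
      exact ⟨m1, hm1, this ▸ hm2⟩
  · rintro π ⟨n, hn⟩
    set k := π.length + 1 with hk
    obtain ⟨hr, hp⟩ := trunc_isPos_of_lt hn (Nat.lt_succ_self π.length)
    have e1 : CTG.labAt g π = (g.tg.trunc k).labAt π := by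
      show g.tg.labAt π = _
      rw [labAt_eq hn, labAt_eq hp]
      rfl
    have e2 : (g.tg.trunc k).labAt π = (h.tg.trunc k).labAt π :=
      iso_labAt (H k) ⟨_, hp⟩
    have hπh : π ∈ (h.tg.trunc k).pos := by
      rw [← iso_pos_eq (H k)]
      exact ⟨_, hp⟩
    obtain ⟨x, hx⟩ := hπh
    obtain ⟨m, hv, hm⟩ := trunc_isPos_short_inl (by omega) hx (by omega)
    have hxeq : x = ⟨Sum.inl m, by rw [← hv]; exact x.2⟩ := Subtype.ext hv
    have e3 : (h.tg.trunc k).labAt π = CTG.labAt h π := by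
      show _ = h.tg.labAt π
      rw [labAt_eq hx, labAt_eq hm, hxeq]
      rfl
    rw [e1, e2, e3]

theorem truncIso_zero (g h : CTG S.bot) : TruncIso g.tg h.tg 0 := by
  constructor
  · intro h0
    exact absurd h0 (by simp)
  · intro k hk
    have : k = 0 := by exact_mod_cast hk.symm
    subst this
    exact trunc_zero_iso _ _

theorem truncIso_refl (g : CTG S.bot) : TruncIso g.tg g.tg ⊤ :=
  ⟨fun _ => iso_refl _, fun k _ => iso_refl _⟩

theorem truncIso_symm {g h : CTG S.bot} {d : ℕ∞} (hT : TruncIso g.tg h.tg d) :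
    TruncIso h.tg g.tg d :=
  ⟨fun ht => iso_symm (hT.1 ht), fun k hk => iso_symm (hT.2 k hk)⟩

theorem truncIso_trans {g₁ g₂ g₃ : CTG S.bot} {d : ℕ∞}
    (h1 : TruncIso g₁.tg g₂.tg d) (h2 : TruncIso g₂.tg g₃.tg d) :
    TruncIso g₁.tg g₃.tg d :=
  ⟨fun ht => iso_trans (h1.1 ht) (h2.1 ht),
    fun k hk => iso_trans (h1.2 k hk) (h2.2 k hk)⟩

theorem truncIso_mono {g h : CTG S.bot} {d e : ℕ∞}
    (hT : TruncIso g.tg h.tg d) (hed : e ≤ d) : TruncIso g.tg h.tg e := by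
  constructor
  · intro het
    subst het
    exact hT.1 (top_le_iff.mp hed)
  · intro k hk
    subst hk
    by_cases hdt : d = ⊤
    · exact Iso.trunc (hT.1 hdt) k
    · lift d to ℕ using hdt with m
      have hkm : k ≤ m := by exact_mod_cast hed
      have hIso := hT.2 m rfl
      rcases Nat.eq_zero_or_pos k with rfl | hk0
      · exact trunc_zero_iso _ _
      · have h1 := Iso.trunc hIso k
        have h2 := trunc_trunc_iso (g := g.tg) (d := m) (e := k)
          (by omega) (by omega) hkm g.reach
        have h3 := trunc_trunc_iso (g := h.tg) (d := m) (e := k)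
          (by omega) (by omega) hkm h.reach
        exact iso_trans (iso_trans (iso_symm h2) h1) h3

theorem truncIso_of_le_simr {g h : CTG S.bot} {k : ℕ}
    (hk : (k : ℕ∞) ≤ simr g h) : TruncIso g.tg h.tg (k : ℕ∞) := by
  rcases eq_or_lt_of_le hk with heq | hlt
  · rcases Nat.eq_zero_or_pos k with rfl | hk0
    · exact truncIso_zero g h
    · by_contra hmem
      have hle : simr g h ≤ ((k - 1 : ℕ) : ℕ∞) := by
        refine sSup_le ?_
        intro b hb
        have hb' : b ≤ (k : ℕ∞) := heq ▸ le_sSup hb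
        have hbne : b ≠ (k : ℕ∞) := fun hbe => hmem (hbe ▸ hb)
        have hblt : b < (k : ℕ∞) := lt_of_le_of_ne hb' hbne
        lift b to ℕ using ne_top_of_lt hblt
        have : b < k := by exact_mod_cast hblt
        exact_mod_cast Nat.le_sub_one_of_lt this
      rw [← heq] at hle
      have : k ≤ k - 1 := by exact_mod_cast hle
      omega
  · obtain ⟨b, hb, hlt'⟩ := lt_sSup_iff.mp hlt
    exact truncIso_mono hb hlt'.le

theorem simr_self (g : CTG S.bot) : simr g g = ⊤ :=
  le_antisymm le_top (le_sSup (truncIso_refl g))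

theorem simr_comm (g h : CTG S.bot) : simr g h = simr h g := by
  unfold simr
  congr 1
  ext d
  exact ⟨truncIso_symm, truncIso_symm⟩

theorem rdist_nonneg (g h : CTG S.bot) : 0 ≤ rdist g h := by
  unfold rdist
  split
  · exact le_refl 0
  · positivity

theorem rdist_eq_zero_iff (g h : CTG S.bot) : rdist g h = 0 ↔ simr g h = ⊤ := by
  unfold rdist
  split
  · next ht => exact ⟨fun _ => ht, fun _ => rfl⟩
  · next ht =>
    constructor
    · intro h0
      exact absurd h0 (ne_of_gt (pow_pos (by norm_num) _))
    · intro h0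
      exact absurd h0 ht

theorem rdist_antitone {a b c d : CTG S.bot} (h12 : simr a b ≤ simr c d) :
    rdist c d ≤ rdist a b := by
  by_cases hcd : simr c d = ⊤
  · rw [show rdist c d = 0 from by unfold rdist; rw [if_pos hcd]]
    exact rdist_nonneg a b
  · have hab : simr a b ≠ ⊤ := fun hct => hcd (top_le_iff.mp (hct ▸ h12))
    unfold rdist
    rw [if_neg hcd, if_neg hab]
    refine pow_le_pow_of_le_one (by norm_num) (by norm_num) ?_
    exact ENat.toNat_le_toNat h12 hcd

theorem enat_le_aux {a b : ℕ∞} (h : ∀ k : ℕ, (k : ℕ∞) ≤ a → (k : ℕ∞) ≤ b) :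
    a ≤ b := by
  by_cases ha : a = ⊤
  · subst ha
    have hb : ∀ k : ℕ, (k : ℕ∞) ≤ b := fun k => h k le_top
    rw [top_le_iff]
    by_contra hbt
    lift b to ℕ using hbt
    have := hb (b + 1)
    have : b + 1 ≤ b := by exact_mod_cast this
    omega
  · lift a to ℕ using ha
    exact h a le_rfl

end CTG
end TGR
namespace TGR

/-- The pair (total canonical term graphs over `Σ`, `d†`) is an
ultrametric space: `d†(g,h) = 0` iff `g = h`, `d†(g,h) = d†(h,g)`, and
`d†(g₁,g₃) ≤ max {d†(g₁,g₂), d†(g₂,g₃)}`. -/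
theorem rigid_ultrametric (S : Signature) :
    (∀ g h : CTG S.bot, g.Total → h.Total → (CTG.rdist g h = 0 ↔ g = h)) ∧
    (∀ g h : CTG S.bot, g.Total → h.Total → CTG.rdist g h = CTG.rdist h g) ∧
    (∀ g₁ g₂ g₃ : CTG S.bot, g₁.Total → g₂.Total → g₃.Total →
      CTG.rdist g₁ g₃ ≤ max (CTG.rdist g₁ g₂) (CTG.rdist g₂ g₃)) := by
  refine ⟨?_, ?_, ?_⟩
  · intro g h _ _
    constructor
    · intro h0
      have htop : CTG.simr g h = ⊤ := (CTG.rdist_eq_zero_iff g h).mp h0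
      apply CTG.eq_of_forall_trunc_iso
      intro k
      have hk : (k : ℕ∞) ≤ CTG.simr g h := by rw [htop]; exact le_top
      exact (CTG.truncIso_of_le_simr hk).2 k rfl
    · rintro rfl
      rw [CTG.rdist_eq_zero_iff]
      exact CTG.simr_self g
  · intro g h _ _
    unfold CTG.rdist
    rw [CTG.simr_comm]
  · intro g₁ g₂ g₃ _ _ _
    have key : min (CTG.simr g₁ g₂) (CTG.simr g₂ g₃) ≤ CTG.simr g₁ g₃ := by
      refine CTG.enat_le_aux ?_
      intro k hk
      have h12 := CTG.truncIso_of_le_simr (le_trans hk (min_le_left _ _))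
      have h23 := CTG.truncIso_of_le_simr (le_trans hk (min_le_right _ _))
      exact le_sSup (CTG.truncIso_trans h12 h23)
    rcases le_total (CTG.simr g₁ g₂) (CTG.simr g₂ g₃) with hle | hle
    · have h1 : CTG.simr g₁ g₂ ≤ CTG.simr g₁ g₃ := by rwa [min_eq_left hle] at key
      exact le_trans (CTG.rdist_antitone h1) (le_max_left _ _)
    · have h1 : CTG.simr g₂ g₃ ≤ CTG.simr g₁ g₃ := by rwa [min_eq_right hle] at key
      exact le_trans (CTG.rdist_antitone h1) (le_max_right _ _)

end TGR
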